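/- arXiv:1812.05314 — 8 statements merged into one kernel-verified Lean document; each statement's English description precedes it below -/
import Mathlib

section
/- Every finite simple graph that is a leaf extension is randomly internally matchable. -/
open SimpleGraph

namespace SimpleGraph

/-- A matching in `G`, viewed as a set of pairwise disjoint edges of `G`. -/
def IsMatchingSet {V : Type*} (G : SimpleGraph V) (M : Set (Sym2 V)) : Prop :=
  M ⊆ G.edgeSet ∧ ∀ e ∈ M, ∀ f ∈ M, e ≠ f → ∀ v : V, ¬(v ∈ e ∧ v ∈ f)

/-- A matching (set of edges) `M` saturates a vertex `v` if some edge of `M` contains `v`. -/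
def SaturatedBy {V : Type*} (M : Set (Sym2 V)) (v : V) : Prop := ∃ e ∈ M, v ∈ e

/-- A perfect internal matching: a matching of `G` saturating every vertex of degree ≥ 2. -/
def IsPerfectInternalMatching {V : Type*} (G : SimpleGraph V) (M : Set (Sym2 V)) : Prop :=
  G.IsMatchingSet M ∧ ∀ v : V, 2 ≤ (G.neighborSet v).ncard → SaturatedBy M v

/-- A graph is randomly internally matchable if every maximal matching is a
perfect internal matching. -/
def RandomlyInternallyMatchable {V : Type*} (G : SimpleGraph V) : Prop :=
  ∀ M : Set (Sym2 V), Maximal G.IsMatchingSet M → G.IsPerfectInternalMatching M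

/-- A stable (independent) set: pairwise non-adjacent vertices. -/
def IsStableSet {V : Type*} (G : SimpleGraph V) (S : Set V) : Prop :=
  S.Pairwise fun u v => ¬ G.Adj u v

/-- A CIS graph: every maximal clique intersects every maximal stable set. -/
def IsCIS {V : Type*} (G : SimpleGraph V) : Prop :=
  ∀ C S : Set V, Maximal G.IsClique C → Maximal G.IsStableSet S → (C ∩ S).Nonempty

/-- `G` is `H`-free: no induced subgraph of `G` is isomorphic to `H`. -/
def InducedFree {V W : Type*} (G : SimpleGraph V) (H : SimpleGraph W) : Prop :=
  ∀ s : Set V, ¬ Nonempty (H ≃g (G.induce s))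

/-- `G` is a leaf extension with core set `S`: every vertex outside `S` has degree exactly one
with its unique neighbor in `S`, and every vertex of `S` has a neighbor outside `S`. -/
def IsLeafExtension {V : Type*} (G : SimpleGraph V) (S : Set V) : Prop :=
  (∀ v ∉ S, (G.neighborSet v).ncard = 1 ∧ ∀ u : V, G.Adj v u → u ∈ S) ∧
  ∀ s ∈ S, ∃ v ∉ S, G.Adj s v

/-- No two distinct vertices have equal closed neighborhoods. -/
def TrueTwinFree {V : Type*} (G : SimpleGraph V) : Prop :=
  ∀ x y : V, (∀ z : V, (G.Adj x z ∨ x = z) ↔ (G.Adj y z ∨ y = z)) → x = y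

/-- The corona `G ∘ K₁`: for each vertex `v` of `G` add a new pendant vertex adjacent to `v`. -/
def corona {V : Type*} (G : SimpleGraph V) : SimpleGraph (V ⊕ V) :=
  SimpleGraph.fromRel fun a b =>
    match a, b with
    | Sum.inl u, Sum.inl v => G.Adj u v
    | Sum.inl u, Sum.inr v => u = v
    | _, _ => False

/-- The graph obtained from `H` by gluing a new triangle vertex along each edge of `H`. -/
def glueTriangles {V : Type*} (H : SimpleGraph V) : SimpleGraph (V ⊕ H.edgeSet) :=
  SimpleGraph.fromRel fun a b =>
    match a, b with
    | Sum.inl u, Sum.inl v => H.Adj u v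
    | Sum.inl u, Sum.inr e => u ∈ (e : Sym2 V)
    | _, _ => False

/-- The clique number: maximum size of a clique. -/
noncomputable def cliqueNumber {V : Type*} (G : SimpleGraph V) : ℕ :=
  sSup {n | ∃ C : Set V, G.IsClique C ∧ C.ncard = n}

/-- The stability (independence) number: maximum size of a stable set. -/
noncomputable def stabilityNumber {V : Type*} (G : SimpleGraph V) : ℕ :=
  sSup {n | ∃ S : Set V, G.IsStableSet S ∧ S.ncard = n}

/-- The matching number: maximum size of a matching. -/
noncomputable def matchingNumber {V : Type*} (G : SimpleGraph V) : ℕ :=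
  sSup {n | ∃ M : Set (Sym2 V), G.IsMatchingSet M ∧ M.ncard = n}

end SimpleGraph

/-- The claw `K_{1,3}`. -/
def clawGraph : SimpleGraph (Fin 1 ⊕ Fin 3) := completeBipartiteGraph (Fin 1) (Fin 3)

/-- The gem: the path `0-1-2-3` together with the universal vertex `4`. -/
def gemGraph : SimpleGraph (Fin 5) :=
  SimpleGraph.fromRel fun a b =>
    b = 4 ∨ (a = 0 ∧ b = 1) ∨ (a = 1 ∧ b = 2) ∨ (a = 2 ∧ b = 3)

/-- The 4-wheel `W₄`: the cycle `0-1-2-3-0` together with the universal vertex `4`. -/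
def wheel4Graph : SimpleGraph (Fin 5) :=
  SimpleGraph.fromRel fun a b =>
    b = 4 ∨ (a = 0 ∧ b = 1) ∨ (a = 1 ∧ b = 2) ∨ (a = 2 ∧ b = 3) ∨ (a = 3 ∧ b = 0)

/-- The disjoint union of `p` copies of `K₂` and `q` copies of `K₁`. -/
def pK2qK1 (p q : ℕ) : SimpleGraph ((Fin p × Fin 2) ⊕ Fin q) :=
  SimpleGraph.fromRel fun a b => ∃ i : Fin p, a = Sum.inl (i, 0) ∧ b = Sum.inl (i, 1)

/-- Every finite graph that is a leaf extension is randomly internally matchable. -/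
theorem stmt_1 {V : Type*} [Fintype V] (G : SimpleGraph V) (S : Set V)
    (h : G.IsLeafExtension S) : G.RandomlyInternallyMatchable := by
  intro M hM
  refine ⟨hM.1, ?_⟩
  intro x hx
  by_contra hsat
  -- x must be in S since its degree is ≥ 2
  have hxS : x ∈ S := by
    by_contra hxS
    have h1 := (h.1 x hxS).1
    omega
  obtain ⟨v, hvS, hadj⟩ := h.2 x hxS
  -- the only neighbor of v is x
  have huniq : ∀ u, G.Adj v u → u = x := by
    obtain ⟨h1, _⟩ := h.1 v hvS
    obtain ⟨a, ha⟩ := Set.ncard_eq_one.mp h1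
    intro u hu
    have hu' : u ∈ G.neighborSet v := hu
    have hx' : x ∈ G.neighborSet v := hadj.symm
    rw [ha, Set.mem_singleton_iff] at hu' hx'
    rw [hu', hx']
  -- v is not saturated by M
  have hvsat : ¬ SaturatedBy M v := by
    rintro ⟨e, heM, hve⟩
    obtain ⟨b, rfl⟩ := Sym2.mem_iff_exists.mp hve
    have hadjvb : G.Adj v b := hM.1.1 heM
    have hb := huniq b hadjvb
    rw [hb] at heM
    exact hsat ⟨s(v, x), heM, Sym2.mem_mk_right v x⟩
  -- insert the edge s(x, v)
  have hM' : G.IsMatchingSet (insert s(x, v) M) := by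
    constructor
    · intro e he
      rcases Set.mem_insert_iff.mp he with rfl | heM
      · exact G.mem_edgeSet.mpr hadj
      · exact hM.1.1 heM
    · intro e he f hf hne w ⟨hwe, hwf⟩
      have key : ∀ g, g ∈ M → ∀ u : V, u ∈ s(x, v) → u ∈ g → False := by
        intro g hg u hu hug
        rcases Sym2.mem_iff.mp hu with rfl | rfl
        · exact hsat ⟨g, hg, hug⟩
        · exact hvsat ⟨g, hg, hug⟩
      rcases Set.mem_insert_iff.mp he with rfl | heM
      · rcases Set.mem_insert_iff.mp hf with rfl | hfM
        · exact hne rfl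
        · exact key f hfM w hwe hwf
      · rcases Set.mem_insert_iff.mp hf with rfl | hfM
        · exact key e heM w hwf hwe
        · exact hM.1.2 e heM f hfM hne w ⟨hwe, hwf⟩
  have hsub : insert s(x, v) M ⊆ M := hM.2 hM' (Set.subset_insert _ _)
  exact hsat ⟨s(x, v), hsub (Set.mem_insert _ _), Sym2.mem_mk_left x v⟩
end

section
/- Every claw-free CIS graph is gem-free. -/
open SimpleGraph

lemma exists_maximal_superset {α : Type*} [Finite α] {P : Set α → Prop} {s : Set α}
    (hs : P s) : ∃ t, s ⊆ t ∧ Maximal P t := by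
  obtain ⟨t, ht, hmax⟩ := Set.Finite.exists_maximalFor id {t | P t ∧ s ⊆ t}
      (Set.toFinite _) ⟨s, hs, subset_rfl⟩
  exact ⟨t, ht.2, ht.1, fun t' ht' hle => hmax ⟨ht', ht.2.trans hle⟩ hle⟩

lemma claw_aux {V : Type*} {G : SimpleGraph V}
    (hclaw : G.InducedFree clawGraph) {u a d x : V}
    (hua : G.Adj u a) (hud : G.Adj u d) (hux : G.Adj u x)
    (nad : ¬ G.Adj a d) (nax : ¬ G.Adj a x) (ndx : ¬ G.Adj d x)
    (had : a ≠ d) (hax : a ≠ x) (hdx : d ≠ x) : False := by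
  apply hclaw {u, a, d, x}
  have hu : u ∈ ({u, a, d, x} : Set V) := by simp
  have ha : a ∈ ({u, a, d, x} : Set V) := by simp
  have hd : d ∈ ({u, a, d, x} : Set V) := by simp
  have hx : x ∈ ({u, a, d, x} : Set V) := by simp
  have hau := hua.symm; have hdu := hud.symm; have hxu := hux.symm
  have nda : ¬G.Adj d a := fun h => nad h.symm
  have nxa : ¬G.Adj x a := fun h => nax h.symm
  have nxd : ¬G.Adj x d := fun h => ndx h.symm
  let f : Fin 1 ⊕ Fin 3 → ({u, a, d, x} : Set V) :=
    Sum.elim (fun _ => ⟨u, hu⟩) (![⟨a, ha⟩, ⟨d, hd⟩, ⟨x, hx⟩])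
  have hbij : Function.Bijective f := by
    constructor
    · rintro (p | p) (q | q) h <;>
        simp only [f, Sum.elim_inl, Sum.elim_inr, Subtype.mk.injEq] at h
      · exact congrArg _ (Subsingleton.elim p q)
      · exfalso; fin_cases q <;> simp_all [hua.ne, hud.ne, hux.ne]
      · exfalso; fin_cases p <;> simp_all [hua.ne', hud.ne', hux.ne']
      · fin_cases p <;> fin_cases q <;>
          simp_all [had, hax, hdx, had.symm, hax.symm, hdx.symm]
    · rintro ⟨y, hy⟩
      rcases hy with h | h | h | h
      · exact ⟨Sum.inl 0, by simp [f, h]⟩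
      · exact ⟨Sum.inr 0, by simp [f]; exact Subtype.ext h.symm⟩
      · exact ⟨Sum.inr 1, by simp [f]; exact Subtype.ext h.symm⟩
      · exact ⟨Sum.inr 2, by simp [f]; exact Subtype.ext h.symm⟩
  refine ⟨⟨Equiv.ofBijective f hbij, ?_⟩⟩
  rintro (p | p) (q | q) <;> fin_cases p <;> fin_cases q <;>
    simp [f, clawGraph, comap_adj, Function.Embedding.coe_subtype,
      hua, hud, hux, hau, hdu, hxu, nad, nax, ndx, nda, nxa, nxd, G.irrefl]


lemma main_aux {V : Type*} [Fintype V] {G : SimpleGraph V}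
    (hclaw : G.InducedFree clawGraph) (hcis : G.IsCIS) {a b c d u : V}
    (hab : G.Adj a b) (hbc : G.Adj b c) (hcd : G.Adj c d)
    (hau : G.Adj a u) (hbu : G.Adj b u) (hcu : G.Adj c u) (hdu : G.Adj d u)
    (nac : ¬ G.Adj a c) (nad : ¬ G.Adj a d) (nbd : ¬ G.Adj b d) : False := by
  have hcb := hbc.symm; have hub := hbu.symm; have huc := hcu.symm
  have hdc := hcd.symm
  have nda : ¬ G.Adj d a := fun h => nad h.symm
  have hclq : G.IsClique {b, c, u} := by
    intro p hp q hq hpq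
    simp only [Set.mem_insert_iff, Set.mem_singleton_iff] at hp hq
    rcases hp with rfl | rfl | rfl <;> rcases hq with rfl | rfl | rfl <;>
      first | exact absurd rfl hpq | assumption
  have hstb : G.IsStableSet {a, d} := by
    intro p hp q hq hpq
    simp only [Set.mem_insert_iff, Set.mem_singleton_iff] at hp hq
    rcases hp with rfl | rfl <;> rcases hq with rfl | rfl <;>
      first | exact absurd rfl hpq | assumption
  obtain ⟨C, hsubC, hCmax⟩ := exists_maximal_superset (P := G.IsClique) hclq
  obtain ⟨S, hsubS, hSmax⟩ := exists_maximal_superset (P := G.IsStableSet) hstb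
  obtain ⟨y, hyC, hyS⟩ := hcis C S hCmax hSmax
  have haS : a ∈ S := hsubS (by simp)
  have hdS : d ∈ S := hsubS (by simp)
  have key : G.Adj a y ∨ G.Adj d y := by
    by_cases h1 : y = b
    · subst h1; exact Or.inl hab
    by_cases h2 : y = c
    · subst h2; exact Or.inr hdc
    by_cases h3 : y = u
    · subst h3; exact Or.inl hau
    have hyb : G.Adj y b := hCmax.prop hyC (hsubC (by simp)) h1
    have hyc : G.Adj y c := hCmax.prop hyC (hsubC (by simp)) h2
    have hyu : G.Adj y u := hCmax.prop hyC (hsubC (by simp)) h3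
    by_contra hcon
    push_neg at hcon
    refine (claw_aux hclaw hau.symm hdu.symm hyu.symm nad hcon.1 hcon.2 ?_ ?_ ?_).elim
    · intro h; rw [h] at hab; exact nbd hab.symm
    · intro h; rw [← h] at hyc; exact nac hyc
    · intro h; rw [← h] at hyb; exact nbd hyb.symm
  rcases key with h | h
  · exact hSmax.prop haS hyS h.ne h
  · exact hSmax.prop hdS hyS h.ne h

/-- Every claw-free CIS graph is gem-free. -/
theorem stmt_2 {V : Type*} [Fintype V] (G : SimpleGraph V)
    (hclaw : G.InducedFree clawGraph) (hcis : G.IsCIS) :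
    G.InducedFree gemGraph := by
  intro s hs
  obtain ⟨φ⟩ := hs
  have adj : ∀ i j : Fin 5, gemGraph.Adj i j → G.Adj (φ i : V) (φ j : V) :=
    fun i j h => φ.map_rel_iff.mpr h
  have nadj : ∀ i j : Fin 5, ¬ gemGraph.Adj i j → ¬ G.Adj (φ i : V) (φ j : V) :=
    fun i j h hadj => h (φ.map_rel_iff.mp hadj)
  exact main_aux hclaw hcis
    (adj 0 1 (by simp only [gemGraph, SimpleGraph.fromRel_adj]; decide))
    (adj 1 2 (by simp only [gemGraph, SimpleGraph.fromRel_adj]; decide))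
    (adj 2 3 (by simp only [gemGraph, SimpleGraph.fromRel_adj]; decide))
    (adj 0 4 (by simp only [gemGraph, SimpleGraph.fromRel_adj]; decide))
    (adj 1 4 (by simp only [gemGraph, SimpleGraph.fromRel_adj]; decide))
    (adj 2 4 (by simp only [gemGraph, SimpleGraph.fromRel_adj]; decide))
    (adj 3 4 (by simp only [gemGraph, SimpleGraph.fromRel_adj]; decide))
    (nadj 0 2 (by simp only [gemGraph, SimpleGraph.fromRel_adj]; decide))
    (nadj 0 3 (by simp only [gemGraph, SimpleGraph.fromRel_adj]; decide))
    (nadj 1 3 (by simp only [gemGraph, SimpleGraph.fromRel_adj]; decide))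
end

section
/- Every connected and co-connected finite simple graph that is both claw-free and gem-free is W_4-free. -/
open SimpleGraph

section Aux
variable {V : Type*} {G : SimpleGraph V}

lemma inducedFree_false {W : Type*} {H : SimpleGraph W}
    (hfree : G.InducedFree H) (f : W → V) (hinj : Function.Injective f)
    (hadj : ∀ a b, H.Adj a b ↔ G.Adj (f a) (f b)) : False := by
  refine hfree (Set.range f) ⟨⟨Equiv.ofInjective f hinj, ?_⟩⟩
  intro a b
  exact (hadj a b).symm

lemma claw_false (hclaw : G.InducedFree clawGraph)
    (c x y z : V) (hx : G.Adj c x) (hy : G.Adj c y) (hz : G.Adj c z)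
    (nxy : ¬G.Adj x y) (nxz : ¬G.Adj x z) (nyz : ¬G.Adj y z)
    (dxy : x ≠ y) (dxz : x ≠ z) (dyz : y ≠ z) : False := by
  have dcx := hx.ne
  have dcy := hy.ne
  have dcz := hz.ne
  apply inducedFree_false hclaw
    (Sum.elim (fun _ : Fin 1 => c) (fun i : Fin 3 => if i = 0 then x else if i = 1 then y else z))
  · rintro (a | a) (b | b) hab
    · simp [Fin.fin_one_eq_zero a, Fin.fin_one_eq_zero b]
    · exfalso; fin_cases b <;> simp_all
    · exfalso; fin_cases a <;> simp_all
    · fin_cases a <;> fin_cases b <;> simp_all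
  · rintro (a | a) (b | b)
    · simp [clawGraph]
    · fin_cases b <;> simp_all [clawGraph]
    · fin_cases a <;> simp_all [clawGraph, G.adj_comm]
    · fin_cases a <;> fin_cases b <;>
        simp_all [clawGraph, G.adj_comm, eq_comm]

lemma gem_false (hgem : G.InducedFree gemGraph)
    (a b c d u : V)
    (eab : G.Adj a b) (ebc : G.Adj b c) (ecd : G.Adj c d)
    (nac : ¬G.Adj a c) (nad : ¬G.Adj a d) (nbd : ¬G.Adj b d)
    (ua : G.Adj u a) (ub : G.Adj u b) (uc : G.Adj u c) (ud : G.Adj u d)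
    (dac : a ≠ c) (dad : a ≠ d) (dbd : b ≠ d) : False := by
  have dab := eab.ne
  have dbc := ebc.ne
  have dcd := ecd.ne
  have dua := ua.ne
  have dub := ub.ne
  have duc := uc.ne
  have dud := ud.ne
  apply inducedFree_false hgem
    (fun i : Fin 5 => if i = 0 then a else if i = 1 then b else if i = 2 then c else if i = 3 then d else u)
  · intro i j hij
    fin_cases i <;> fin_cases j <;> simp_all
  · intro i j
    fin_cases i <;> fin_cases j <;>
      simp_all [gemGraph, SimpleGraph.fromRel_adj, G.adj_comm, eq_comm]

end Aux

section Wheel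
variable {V : Type*} {G : SimpleGraph V}

/-- An induced 4-wheel: hub `h`, rim cycle `v1-v2-v3-v4`. -/
structure IsW (G : SimpleGraph V) (h v1 v2 v3 v4 : V) : Prop where
  e12 : G.Adj v1 v2
  e23 : G.Adj v2 v3
  e34 : G.Adj v3 v4
  e41 : G.Adj v4 v1
  n13 : ¬ G.Adj v1 v3
  n24 : ¬ G.Adj v2 v4
  h1 : G.Adj h v1
  h2 : G.Adj h v2
  h3 : G.Adj h v3
  h4 : G.Adj h v4
  d13 : v1 ≠ v3
  d24 : v2 ≠ v4

lemma IsW.rot {h v1 v2 v3 v4 : V} (W : IsW G h v1 v2 v3 v4) : IsW G h v2 v3 v4 v1 :=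
  ⟨W.e23, W.e34, W.e41, W.e12, W.n24, fun x => W.n13 x.symm,
   W.h2, W.h3, W.h4, W.h1, W.d24, W.d13.symm⟩

lemma IsW.refl {h v1 v2 v3 v4 : V} (W : IsW G h v1 v2 v3 v4) : IsW G h v1 v4 v3 v2 :=
  ⟨W.e41.symm, W.e34.symm, W.e23.symm, W.e12.symm, W.n13, fun x => W.n24 x.symm,
   W.h1, W.h4, W.h3, W.h2, W.d13, W.d24.symm⟩

variable {h v1 v2 v3 v4 : V}

/-- If `w ∉ N[h]` is adjacent to two consecutive rim vertices, it is adjacent to the whole rim. -/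
lemma L0' (hgem : G.InducedFree gemGraph) (W : IsW G h v1 v2 v3 v4) {w : V}
    (hw1 : G.Adj w v1) (hw2 : G.Adj w v2) (nwh : ¬G.Adj w h) (wneh : w ≠ h) :
    G.Adj w v3 ∧ G.Adj w v4 := by
  have nhw : ¬G.Adj h w := fun x => nwh x.symm
  have wd3 : w ≠ v3 := fun e => nwh (by rw [e]; exact W.h3.symm)
  have wd4 : w ≠ v4 := fun e => nwh (by rw [e]; exact W.h4.symm)
  have hw4 : G.Adj w v4 := by
    by_contra n4
    exact gem_false hgem v4 h v2 w v1 W.h4.symm W.h2 hw2.symm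
      (fun x => W.n24 x.symm) (fun x => n4 x.symm) nhw
      W.e41.symm W.h1.symm W.e12 hw1.symm
      W.d24.symm (fun e => wd4 e.symm) (fun e => wneh e.symm)
  have hw3 : G.Adj w v3 := by
    by_contra n3
    exact gem_false hgem v3 h v1 w v4 W.h3.symm W.h1 hw1.symm
      (fun x => W.n13 x.symm) (fun x => n3 x.symm) nhw
      W.e34.symm W.h4.symm W.e41 hw4.symm
      W.d13.symm (fun e => wd3 e.symm) (fun e => wneh e.symm)
  exact ⟨hw3, hw4⟩

/-- If `w ∉ N[h]` is adjacent to one rim vertex, it is adjacent to the whole rim. -/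
lemma L0 (hclaw : G.InducedFree clawGraph) (hgem : G.InducedFree gemGraph)
    (W : IsW G h v1 v2 v3 v4) {w : V}
    (hw1 : G.Adj w v1) (nwh : ¬G.Adj w h) (wneh : w ≠ h) :
    G.Adj w v2 ∧ G.Adj w v3 ∧ G.Adj w v4 := by
  have wd2 : w ≠ v2 := fun e => nwh (by rw [e]; exact W.h2.symm)
  have wd4 : w ≠ v4 := fun e => nwh (by rw [e]; exact W.h4.symm)
  have D : G.Adj w v2 ∨ G.Adj w v4 := by
    by_contra hc
    push_neg at hc
    exact claw_false hclaw v1 w v2 v4 hw1.symm W.e12 W.e41.symm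
      hc.1 hc.2 W.n24 wd2 wd4 W.d24
  rcases D with hw2 | hw4
  · obtain ⟨h3, h4⟩ := L0' hgem W hw1 hw2 nwh wneh
    exact ⟨hw2, h3, h4⟩
  · obtain ⟨h3, h2⟩ := L0' hgem W.refl hw1 hw4 nwh wneh
    exact ⟨h2, h3, hw4⟩

/-- A neighbor of `h` outside the rim is adjacent to an opposite rim pair. -/
lemma L_opp (hclaw : G.InducedFree clawGraph) (hgem : G.InducedFree gemGraph)
    (W : IsW G h v1 v2 v3 v4) {u : V} (hu : G.Adj h u)
    (d1 : u ≠ v1) (d2 : u ≠ v2) (d3 : u ≠ v3) (d4 : u ≠ v4) :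
    (G.Adj u v1 ∧ G.Adj u v3) ∨ (G.Adj u v2 ∧ G.Adj u v4) := by
  have D13 : G.Adj u v1 ∨ G.Adj u v3 := by
    by_contra hc
    push_neg at hc
    exact claw_false hclaw h u v1 v3 hu W.h1 W.h3 hc.1 hc.2 W.n13 d1 d3 W.d13
  have D24 : G.Adj u v2 ∨ G.Adj u v4 := by
    by_contra hc
    push_neg at hc
    exact claw_false hclaw h u v2 v4 hu W.h2 W.h4 hc.1 hc.2 W.n24 d2 d4 W.d24
  by_cases a1 : G.Adj u v1
  · by_cases a3 : G.Adj u v3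
    · exact Or.inl ⟨a1, a3⟩
    · rcases D24 with a2 | a4
      · by_cases a4 : G.Adj u v4
        · exact Or.inr ⟨a2, a4⟩
        · exact absurd (gem_false hgem u v2 v3 v4 h a2 W.e23 W.e34 a3 a4 W.n24
            hu W.h2 W.h3 W.h4 d3 d4 W.d24) not_false
      · by_cases a2 : G.Adj u v2
        · exact Or.inr ⟨a2, a4⟩
        · exact absurd (gem_false hgem u v1 v2 v3 h a1 W.e12 W.e23 a2 a3 W.n13
            hu W.h1 W.h2 W.h3 d2 d3 W.d13) not_false
  · have a3 : G.Adj u v3 := D13.resolve_left a1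
    rcases D24 with a2 | a4
    · by_cases a4 : G.Adj u v4
      · exact Or.inr ⟨a2, a4⟩
      · exact absurd (gem_false hgem u v3 v4 v1 h a3 W.e34 W.e41 a4 a1
          (fun x => W.n13 x.symm) hu W.h3 W.h4 W.h1 d4 d1 W.d13.symm) not_false
    · by_cases a2 : G.Adj u v2
      · exact Or.inr ⟨a2, a4⟩
      · exact absurd (gem_false hgem u v4 v1 v2 h a4 W.e41 W.e12 a1 a2
          (fun x => W.n24 x.symm) hu W.h4 W.h1 W.h2 d1 d2 W.d24.symm) not_false

/-- The invariant propagated along `G`-edges. -/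
def Qprop (G : SimpleGraph V) (h v1 v2 v3 v4 u : V) : Prop :=
  u = h ∨ G.Adj h u ∨ (G.Adj u v1 ∧ G.Adj u v2 ∧ G.Adj u v3 ∧ G.Adj u v4)

lemma Qstep (hclaw : G.InducedFree clawGraph) (hgem : G.InducedFree gemGraph)
    (W : IsW G h v1 v2 v3 v4) {u w : V}
    (hQ : Qprop G h v1 v2 v3 v4 u) (huw : G.Adj u w) : Qprop G h v1 v2 v3 v4 w := by
  by_cases hwh : w = h
  · exact Or.inl hwh
  by_cases hah : G.Adj h w
  · exact Or.inr (Or.inl hah)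
  have nwh : ¬G.Adj w h := fun x => hah x.symm
  have wd1 : w ≠ v1 := fun e => hah (by rw [e]; exact W.h1)
  have wd2 : w ≠ v2 := fun e => hah (by rw [e]; exact W.h2)
  have wd3 : w ≠ v3 := fun e => hah (by rw [e]; exact W.h3)
  have wd4 : w ≠ v4 := fun e => hah (by rw [e]; exact W.h4)
  have some : G.Adj w v1 ∨ G.Adj w v2 ∨ G.Adj w v3 ∨ G.Adj w v4 := by
    rcases hQ with rfl | huh | ⟨a1, a2, a3, a4⟩
    · exact absurd huw hah
    · by_cases u1 : u = v1
      · exact Or.inl (by rw [← u1]; exact huw.symm)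
      by_cases u2 : u = v2
      · exact Or.inr (Or.inl (by rw [← u2]; exact huw.symm))
      by_cases u3 : u = v3
      · exact Or.inr (Or.inr (Or.inl (by rw [← u3]; exact huw.symm)))
      by_cases u4 : u = v4
      · exact Or.inr (Or.inr (Or.inr (by rw [← u4]; exact huw.symm)))
      by_contra hc
      push_neg at hc
      obtain ⟨c1, c2, c3, c4⟩ := hc
      rcases L_opp hclaw hgem W huh u1 u2 u3 u4 with ⟨a1, a3⟩ | ⟨a2, a4⟩
      · exact claw_false hclaw u w v1 v3 huw a1 a3 c1 c3 W.n13 wd1 wd3 W.d13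
      · exact claw_false hclaw u w v2 v4 huw a2 a4 c2 c4 W.n24 wd2 wd4 W.d24
    · by_contra hc
      push_neg at hc
      exact claw_false hclaw u w v1 v3 huw a1 a3 hc.1 hc.2.2.1 W.n13 wd1 wd3 W.d13
  refine Or.inr (Or.inr ?_)
  rcases some with s | s | s | s
  · obtain ⟨b2, b3, b4⟩ := L0 hclaw hgem W s nwh hwh
    exact ⟨s, b2, b3, b4⟩
  · obtain ⟨b3, b4, b1⟩ := L0 hclaw hgem W.rot s nwh hwh
    exact ⟨b1, s, b3, b4⟩
  · obtain ⟨b4, b1, b2⟩ := L0 hclaw hgem W.rot.rot s nwh hwh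
    exact ⟨b1, b2, s, b4⟩
  · obtain ⟨b1, b2, b3⟩ := L0 hclaw hgem W.rot.rot.rot s nwh hwh
    exact ⟨b1, b2, b3, s⟩

/-- The invariant propagated along complement edges. -/
lemma Dstep (hclaw : G.InducedFree clawGraph) (hgem : G.InducedFree gemGraph)
    (W : IsW G h v1 v2 v3 v4)
    (Qall : ∀ u : V, Qprop G h v1 v2 v3 v4 u) {u w : V}
    (hD : G.Adj u v1 ∧ G.Adj u v2 ∧ G.Adj u v3 ∧ G.Adj u v4)
    (hne : u ≠ w) (nuw : ¬G.Adj u w) :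
    G.Adj w v1 ∧ G.Adj w v2 ∧ G.Adj w v3 ∧ G.Adj w v4 := by
  obtain ⟨a1, a2, a3, a4⟩ := hD
  by_cases hwh : w = h
  · rw [hwh]; exact ⟨W.h1, W.h2, W.h3, W.h4⟩
  by_cases hah : G.Adj h w
  · have wd1 : w ≠ v1 := fun e => nuw (by rw [e]; exact a1)
    have wd2 : w ≠ v2 := fun e => nuw (by rw [e]; exact a2)
    have wd3 : w ≠ v3 := fun e => nuw (by rw [e]; exact a3)
    have wd4 : w ≠ v4 := fun e => nuw (by rw [e]; exact a4)
    have und : u ≠ h := fun e => nuw (by rw [e]; exact hah)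
    have nwu : ¬G.Adj w u := fun x => nuw x.symm
    have dwu : w ≠ u := hne.symm
    by_cases huh : G.Adj h u
    · -- opposite-pair gems with universal vertex h
      have i13 : G.Adj w v1 → G.Adj w v3 := fun hw1 => by
        by_contra n3
        exact gem_false hgem w v1 u v3 h hw1 a1.symm a3 nwu n3 W.n13
          hah W.h1 huh W.h3 dwu wd3 (fun e => W.d13 e)
      have i31 : G.Adj w v3 → G.Adj w v1 := fun hw3 => by
        by_contra n1
        exact gem_false hgem w v3 u v1 h hw3 a3.symm a1 nwu n1 (fun x => W.n13 x.symm)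
          hah W.h3 huh W.h1 dwu wd1 W.d13.symm
      have i24 : G.Adj w v2 → G.Adj w v4 := fun hw2 => by
        by_contra n4
        exact gem_false hgem w v2 u v4 h hw2 a2.symm a4 nwu n4 W.n24
          hah W.h2 huh W.h4 dwu wd4 W.d24
      have i42 : G.Adj w v4 → G.Adj w v2 := fun hw4 => by
        by_contra n2
        exact gem_false hgem w v4 u v2 h hw4 a4.symm a2 nwu n2 (fun x => W.n24 x.symm)
          hah W.h4 huh W.h2 dwu wd2 W.d24.symm
      have w1 : G.Adj w v1 := by
        by_contra n1
        exact claw_false hclaw h w v1 v3 hah W.h1 W.h3 n1 (fun x => n1 (i31 x)) W.n13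
          wd1 wd3 W.d13
      have w2 : G.Adj w v2 := by
        by_contra n2
        exact claw_false hclaw h w v2 v4 hah W.h2 W.h4 n2 (fun x => n2 (i42 x)) W.n24
          wd2 wd4 W.d24
      exact ⟨w1, w2, i13 w1, i24 w2⟩
    · -- consecutive implications via gems with rim universal vertices
      have nhu : ¬G.Adj h u := huh
      have c12 : G.Adj w v1 → G.Adj w v2 := fun hw1 => by
        by_contra n2
        exact gem_false hgem w h v2 u v1 hah.symm W.h2 a2.symm n2 nwu nhu
          hw1.symm W.h1.symm W.e12 a1.symm wd2 dwu (fun e => und e.symm)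
      have c23 : G.Adj w v2 → G.Adj w v3 := fun hw2 => by
        by_contra n3
        exact gem_false hgem w h v3 u v2 hah.symm W.h3 a3.symm n3 nwu nhu
          hw2.symm W.h2.symm W.e23 a2.symm wd3 dwu (fun e => und e.symm)
      have c34 : G.Adj w v3 → G.Adj w v4 := fun hw3 => by
        by_contra n4
        exact gem_false hgem w h v4 u v3 hah.symm W.h4 a4.symm n4 nwu nhu
          hw3.symm W.h3.symm W.e34 a3.symm wd4 dwu (fun e => und e.symm)
      have c41 : G.Adj w v4 → G.Adj w v1 := fun hw4 => by
        by_contra n1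
        exact gem_false hgem w h v1 u v4 hah.symm W.h1 a1.symm n1 nwu nhu
          hw4.symm W.h4.symm W.e41 a4.symm wd1 dwu (fun e => und e.symm)
      have some : G.Adj w v1 ∨ G.Adj w v2 ∨ G.Adj w v3 ∨ G.Adj w v4 := by
        by_contra hc
        push_neg at hc
        exact claw_false hclaw h w v1 v3 hah W.h1 W.h3 hc.1 hc.2.2.1 W.n13 wd1 wd3 W.d13
      rcases some with s | s | s | s
      · exact ⟨s, c12 s, c23 (c12 s), c34 (c23 (c12 s))⟩
      · exact ⟨c41 (c34 (c23 s)), s, c23 s, c34 (c23 s)⟩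
      · exact ⟨c41 (c34 s), c12 (c41 (c34 s)), s, c34 s⟩
      · exact ⟨c41 s, c12 (c41 s), c23 (c12 (c41 s)), s⟩
  · rcases Qall w with rfl | hw | hw
    · exact ⟨W.h1, W.h2, W.h3, W.h4⟩
    · exact absurd hw hah
    · exact hw

end Wheel

/-- Every connected and co-connected {claw, gem}-free graph is `W₄`-free. -/
theorem stmt_3 {V : Type*} [Fintype V] (G : SimpleGraph V)
    (hconn : G.Connected) (hcoconn : Gᶜ.Connected)
    (hclaw : G.InducedFree clawGraph) (hgem : G.InducedFree gemGraph) :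
    G.InducedFree wheel4Graph := by
  intro s hiso
  obtain ⟨e⟩ := hiso
  set f : Fin 5 → V := fun i => ((e i : s) : V) with hf
  have finj : Function.Injective f := fun i j hij => e.injective (Subtype.ext hij)
  have hA : ∀ i j, wheel4Graph.Adj i j ↔ G.Adj (f i) (f j) := by
    intro i j
    rw [← e.map_rel_iff]
    exact Iff.rfl
  have wadj : ∀ i j : Fin 5, wheel4Graph.Adj i j ↔
      (i ≠ j ∧ ((j = 4 ∨ (i = 0 ∧ j = 1) ∨ (i = 1 ∧ j = 2) ∨ (i = 2 ∧ j = 3) ∨ (i = 3 ∧ j = 0)) ∨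
        (i = 4 ∨ (j = 0 ∧ i = 1) ∨ (j = 1 ∧ i = 2) ∨ (j = 2 ∧ i = 3) ∨ (j = 3 ∧ i = 0)))) := by
    intro i j
    exact SimpleGraph.fromRel_adj _ i j
  have W : IsW G (f 4) (f 0) (f 1) (f 2) (f 3) :=
    { e12 := (hA 0 1).mp ((wadj 0 1).mpr (by decide))
      e23 := (hA 1 2).mp ((wadj 1 2).mpr (by decide))
      e34 := (hA 2 3).mp ((wadj 2 3).mpr (by decide))
      e41 := (hA 3 0).mp ((wadj 3 0).mpr (by decide))
      n13 := fun x => (by decide : ¬ ((0:Fin 5) ≠ 2 ∧ _)) ((wadj 0 2).mp ((hA 0 2).mpr x))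
      n24 := fun x => (by decide : ¬ ((1:Fin 5) ≠ 3 ∧ _)) ((wadj 1 3).mp ((hA 1 3).mpr x))
      h1 := (hA 4 0).mp ((wadj 4 0).mpr (by decide))
      h2 := (hA 4 1).mp ((wadj 4 1).mpr (by decide))
      h3 := (hA 4 2).mp ((wadj 4 2).mpr (by decide))
      h4 := (hA 4 3).mp ((wadj 4 3).mpr (by decide))
      d13 := fun x => (by decide : (0:Fin 5) ≠ 2) (finj x)
      d24 := fun x => (by decide : (1:Fin 5) ≠ 3) (finj x) }
  have Qall : ∀ u : V, Qprop G (f 4) (f 0) (f 1) (f 2) (f 3) u := by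
    have key : ∀ (a b : V), G.Walk a b → Qprop G (f 4) (f 0) (f 1) (f 2) (f 3) a →
        Qprop G (f 4) (f 0) (f 1) (f 2) (f 3) b := by
      intro a b p
      induction p with
      | nil => exact id
      | cons h' p ih => exact fun qa => ih (Qstep hclaw hgem W qa h')
    intro u
    obtain ⟨p⟩ := hconn.preconnected (f 4) u
    exact key _ _ p (Or.inl rfl)
  have key2 : ∀ (a b : V), Gᶜ.Walk a b →
      (G.Adj a (f 0) ∧ G.Adj a (f 1) ∧ G.Adj a (f 2) ∧ G.Adj a (f 3)) →
      (G.Adj b (f 0) ∧ G.Adj b (f 1) ∧ G.Adj b (f 2) ∧ G.Adj b (f 3)) := by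
    intro a b p
    induction p with
    | nil => exact id
    | cons h' p ih =>
        intro da
        obtain ⟨hne, hnadj⟩ := (G.compl_adj _ _).mp h'
        exact ih (Dstep hclaw hgem W Qall da hne hnadj)
  obtain ⟨p⟩ := hcoconn.preconnected (f 4) (f 0)
  have := (key2 _ _ p ⟨W.h1, W.h2, W.h3, W.h4⟩).1
  exact G.loopless.irrefl _ this
end

section
/- Every connected and co-connected claw-free CIS graph is both gem-free and W_4-free. -/
open SimpleGraph

section Aux
variable {V : Type*} {G : SimpleGraph V}

private lemma exists_max_clique {C : Set V} (h : G.IsClique C) :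
    ∃ M, C ⊆ M ∧ Maximal G.IsClique M := by
  obtain ⟨M, hsub, hmax⟩ := zorn_subset_nonempty {s : Set V | G.IsClique s}
    (fun c hc hchain _ => ⟨⋃₀ c, fun u hu v hv huv => by
        obtain ⟨su, hsu, hus⟩ := hu
        obtain ⟨sv, hsv, hvs⟩ := hv
        rcases hchain.total hsu hsv with hle | hle
        · exact hc hsv (hle hus) hvs huv
        · exact hc hsu hus (hle hvs) huv,
      fun s hs => Set.subset_sUnion_of_mem hs⟩) C h
  exact ⟨M, hsub, hmax⟩

private lemma exists_max_stable {C : Set V} (h : G.IsStableSet C) :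
    ∃ M, C ⊆ M ∧ Maximal G.IsStableSet M := by
  obtain ⟨M, hsub, hmax⟩ := zorn_subset_nonempty {s : Set V | G.IsStableSet s}
    (fun c hc hchain _ => ⟨⋃₀ c, fun u hu v hv huv => by
        obtain ⟨su, hsu, hus⟩ := hu
        obtain ⟨sv, hsv, hvs⟩ := hv
        rcases hchain.total hsu hsv with hle | hle
        · exact hc hsv (hle hus) hvs huv
        · exact hc hsu hus (hle hvs) huv,
      fun s hs => Set.subset_sUnion_of_mem hs⟩) C h
  exact ⟨M, hsub, hmax⟩

private lemma noClaw (hclaw : G.InducedFree clawGraph)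
    {c x y z : V} (hcx : G.Adj c x) (hcy : G.Adj c y) (hcz : G.Adj c z)
    (hxy : ¬G.Adj x y) (hxz : ¬G.Adj x z) (hyz : ¬G.Adj y z)
    (nxy : x ≠ y) (nxz : x ≠ z) (nyz : y ≠ z) : False := by
  classical
  set f : Fin 1 ⊕ Fin 3 → V := fun a => match a with
    | .inl _ => c | .inr 0 => x | .inr 1 => y | .inr 2 => z with hf
  have hinj : Function.Injective f := by
    rintro (a | a) (b | b) h
    · cases Subsingleton.elim a b; rfl
    · exfalso
      fin_cases b <;> simp only [f] at h
      · exact hcx.ne h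
      · exact hcy.ne h
      · exact hcz.ne h
    · exfalso
      fin_cases a <;> simp only [f] at h
      · exact hcx.ne h.symm
      · exact hcy.ne h.symm
      · exact hcz.ne h.symm
    · congr 1
      fin_cases a <;> fin_cases b <;> simp only [f] at h ⊢ <;>
        first
          | rfl
          | exact absurd h nxy | exact absurd h nxz | exact absurd h nyz
          | exact absurd h.symm nxy | exact absurd h.symm nxz | exact absurd h.symm nyz
  have key : ∀ a b, clawGraph.Adj a b ↔ G.Adj (f a) (f b) := by
    rintro (a | a) (b | b)
    · simp [clawGraph, f]
    · constructor
      · intro _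
        fin_cases b <;> simp only [f] <;> [exact hcx; exact hcy; exact hcz]
      · intro _; simp [clawGraph]
    · constructor
      · intro _
        fin_cases a <;> simp only [f] <;> [exact hcx.symm; exact hcy.symm; exact hcz.symm]
      · intro _; simp [clawGraph]
    · constructor
      · intro hadj; exfalso; simp [clawGraph] at hadj
      · intro hadj; exfalso
        fin_cases a <;> fin_cases b <;> simp only [f] at hadj <;>
          first
            | exact G.irrefl hadj
            | exact hxy hadj | exact hxz hadj | exact hyz hadj
            | exact hxy hadj.symm | exact hxz hadj.symm | exact hyz hadj.symm
  refine hclaw (Set.range f) ⟨{ toEquiv := Equiv.ofInjective f hinj, map_rel_iff' := ?_ }⟩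
  intro a b
  rw [comap_adj]
  simp only [Function.Embedding.coe_subtype, Equiv.ofInjective_apply]
  exact (key a b).symm

/-- vertex-level gem-freeness: path a0-a1-a2-a3 plus universal u is impossible. -/
private lemma noGem (hclaw : G.InducedFree clawGraph) (hcis : G.IsCIS)
    {a0 a1 a2 a3 u : V}
    (h01 : G.Adj a0 a1) (h12 : G.Adj a1 a2) (h23 : G.Adj a2 a3)
    (h02 : ¬G.Adj a0 a2) (h03 : ¬G.Adj a0 a3) (h13 : ¬G.Adj a1 a3)
    (n02 : a0 ≠ a2) (n03 : a0 ≠ a3) (n13 : a1 ≠ a3)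
    (hu0 : G.Adj u a0) (hu1 : G.Adj u a1) (hu2 : G.Adj u a2) (hu3 : G.Adj u a3) :
    False := by
  have hclq : G.IsClique {a1, a2, u} := by
    intro v hv w hw hvw
    simp only [Set.mem_insert_iff, Set.mem_singleton_iff] at hv hw
    rcases hv with rfl | rfl | rfl <;> rcases hw with rfl | rfl | rfl <;>
      first
        | exact absurd rfl hvw
        | exact h12 | exact h12.symm
        | exact hu1 | exact hu1.symm | exact hu2 | exact hu2.symm
  have hstb : G.IsStableSet {a0, a3} := by
    intro v hv w hw hvw
    simp only [Set.mem_insert_iff, Set.mem_singleton_iff] at hv hw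
    rcases hv with rfl | rfl <;> rcases hw with rfl | rfl <;>
      first
        | exact absurd rfl hvw
        | exact h03 | exact fun h => h03 h.symm
  obtain ⟨Cm, hCsub, hCm⟩ := exists_max_clique hclq
  obtain ⟨Sm, hSsub, hSm⟩ := exists_max_stable hstb
  obtain ⟨x, hxC, hxS⟩ := hcis Cm Sm hCm hSm
  have ha1C : a1 ∈ Cm := hCsub (by simp)
  have ha2C : a2 ∈ Cm := hCsub (by simp)
  have huC : u ∈ Cm := hCsub (by simp)
  have ha0S : a0 ∈ Sm := hSsub (by simp)
  have ha3S : a3 ∈ Sm := hSsub (by simp)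
  have ha0C : a0 ∉ Cm := fun h => h02 (hCm.1 h ha2C n02)
  have ha3C : a3 ∉ Cm := fun h => h13 (hCm.1 ha1C h n13)
  have hx0 : x ≠ a0 := fun h => ha0C (h ▸ hxC)
  have hx3 : x ≠ a3 := fun h => ha3C (h ▸ hxC)
  have hx1 : x ≠ a1 := by rintro rfl; exact hSm.1 hxS ha0S h01.ne' h01.symm
  have hx2 : x ≠ a2 := by rintro rfl; exact hSm.1 hxS ha3S h23.ne h23
  have hxu : x ≠ u := by rintro rfl; exact hSm.1 hxS ha0S hu0.ne hu0
  have hxa0 : ¬G.Adj x a0 := hSm.1 hxS ha0S hx0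
  have hxa3 : ¬G.Adj x a3 := hSm.1 hxS ha3S hx3
  have hux : G.Adj u x := hCm.1 huC hxC hxu.symm
  exact noClaw hclaw hux hu0 hu3 hxa0 hxa3 h03 hx0 hx3 n03

/-- Key Lemma 1: induced wheel (p,q,r,s) with center t, and w adjacent to r but not p,
then w is adjacent to q, s, and t. -/
private lemma lemma1 (hclaw : G.InducedFree clawGraph) (hcis : G.IsCIS)
    {p q r s t w : V}
    (hpq : G.Adj p q) (hqr : G.Adj q r) (hrs : G.Adj r s) (hsp : G.Adj s p)
    (hpr : ¬G.Adj p r) (hqs : ¬G.Adj q s) (hpr' : p ≠ r) (hqs' : q ≠ s)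
    (htp : G.Adj t p) (htq : G.Adj t q) (htr : G.Adj t r) (hts : G.Adj t s)
    (hwr : G.Adj w r) (hwp : ¬G.Adj w p) :
    G.Adj w q ∧ G.Adj w s ∧ G.Adj w t := by
  have hwnep : w ≠ p := by rintro rfl; exact hpr hwr
  have hwneq : w ≠ q := by rintro rfl; exact hwp hpq.symm
  have hwnes : w ≠ s := by rintro rfl; exact hwp hsp
  have hwnet : w ≠ t := by rintro rfl; exact hwp htp
  have hA : G.Adj w q ∧ G.Adj w t := by
    by_contra hA
    have hclq : G.IsClique {q, r, t} := by
      intro a ha b hb hab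
      simp only [Set.mem_insert_iff, Set.mem_singleton_iff] at ha hb
      rcases ha with rfl | rfl | rfl <;> rcases hb with rfl | rfl | rfl <;>
        first
          | exact absurd rfl hab
          | exact hqr | exact hqr.symm
          | exact htq | exact htq.symm | exact htr | exact htr.symm
    have hstb : G.IsStableSet {p, w} := by
      intro a ha b hb hab
      simp only [Set.mem_insert_iff, Set.mem_singleton_iff] at ha hb
      rcases ha with rfl | rfl <;> rcases hb with rfl | rfl <;>
        first
          | exact absurd rfl hab
          | exact hwp | exact fun h => hwp h.symm
    obtain ⟨Cm, hCsub, hCm⟩ := exists_max_clique hclq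
    obtain ⟨Sm, hSsub, hSm⟩ := exists_max_stable hstb
    obtain ⟨x, hxC, hxS⟩ := hcis Cm Sm hCm hSm
    have hqC : q ∈ Cm := hCsub (by simp)
    have hrC : r ∈ Cm := hCsub (by simp)
    have htC : t ∈ Cm := hCsub (by simp)
    have hpS : p ∈ Sm := hSsub (by simp)
    have hwS : w ∈ Sm := hSsub (by simp)
    have hpC : p ∉ Cm := fun h => hpr (hCm.1 h hrC hpr')
    have hwC : w ∉ Cm := fun h => hA ⟨hCm.1 h hqC hwneq, hCm.1 h htC hwnet⟩
    have hxp' : x ≠ p := fun h => hpC (h ▸ hxC)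
    have hxw' : x ≠ w := fun h => hwC (h ▸ hxC)
    have hxq' : x ≠ q := by rintro rfl; exact hSm.1 hxS hpS hpq.ne' hpq.symm
    have hxr' : x ≠ r := by rintro rfl; exact hSm.1 hxS hwS hwr.ne' hwr.symm
    have hxt' : x ≠ t := by rintro rfl; exact hSm.1 hxS hpS htp.ne htp
    have hxq : G.Adj x q := hCm.1 hxC hqC hxq'
    have hxr : G.Adj x r := hCm.1 hxC hrC hxr'
    have hxt : G.Adj x t := hCm.1 hxC htC hxt'
    have hxp : ¬G.Adj x p := hSm.1 hxS hpS hxp'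
    have hxw : ¬G.Adj x w := hSm.1 hxS hwS hxw'
    have hxs' : x ≠ s := by rintro rfl; exact hqs hxq.symm
    by_cases hxs : G.Adj x s
    · -- claw chain
      have hwq2 : ¬G.Adj w q := fun h =>
        noClaw hclaw hpq.symm hxq.symm h.symm
          (fun hh => hxp hh.symm) (fun hh => hwp hh.symm) hxw
          hxp'.symm hwnep.symm hxw'
      have hws2 : ¬G.Adj w s := fun h =>
        noClaw hclaw hsp hxs.symm h.symm
          (fun hh => hxp hh.symm) (fun hh => hwp hh.symm) hxw
          hxp'.symm hwnep.symm hxw'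
      exact noClaw hclaw hqr.symm hrs hwr.symm hqs
        (fun h => hwq2 h.symm) (fun h => hws2 h.symm)
        hqs' hwneq.symm hwnes.symm
    · -- gem (x, q, p, s, t)
      exact noGem hclaw hcis hxq hpq.symm hsp.symm hxp hxs hqs hxp' hxs' hqs'
        hxt.symm htq htp hts
  obtain ⟨hwq, hwt⟩ := hA
  have hws : G.Adj w s := by
    by_contra hws
    exact noGem hclaw hcis hwq hpq.symm hsp.symm hwp hws hqs hwnep hwnes hqs'
      hwt.symm htq htp hts
  exact ⟨hwq, hws, hwt⟩

end Aux

section Core2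
variable {V : Type*} {G : SimpleGraph V}

/-- step aux for the closure lemma -/
private lemma stepAux (hclaw : G.InducedFree clawGraph) (hcis : G.IsCIS)
    {p q r s t z v : V}
    (hpq : G.Adj p q) (hqr : G.Adj q r) (hrs : G.Adj r s) (hsp : G.Adj s p)
    (hpr : ¬G.Adj p r) (hqs : ¬G.Adj q s) (hpr' : p ≠ r) (hqs' : q ≠ s)
    (htp : G.Adj t p) (htq : G.Adj t q) (htr : G.Adj t r) (hts : G.Adj t s)
    (hzp : G.Adj z p) (hzr : G.Adj z r) (hzv : G.Adj z v) :
    (G.Adj v q ∧ G.Adj v s) ∨ (G.Adj v p ∧ G.Adj v r) := by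
  by_cases hv_p : v = p
  · subst hv_p; exact Or.inl ⟨hpq, hsp.symm⟩
  by_cases hv_r : v = r
  · subst hv_r; exact Or.inl ⟨hqr.symm, hrs⟩
  by_cases hvp : G.Adj v p <;> by_cases hvr : G.Adj v r
  · exact Or.inr ⟨hvp, hvr⟩
  · -- Adj v p, ¬Adj v r : lemma1 on wheel (r,s,p,q,t)
    obtain ⟨h1, h2, _⟩ := lemma1 hclaw hcis hrs hsp hpq hqr
      (fun h => hpr h.symm) (fun h => hqs h.symm) (Ne.symm hpr') (Ne.symm hqs')
      htr hts htp htq hvp hvr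
    exact Or.inl ⟨h2, h1⟩
  · -- ¬Adj v p, Adj v r
    obtain ⟨h1, h2, _⟩ := lemma1 hclaw hcis hpq hqr hrs hsp hpr hqs hpr' hqs'
      htp htq htr hts hvr hvp
    exact Or.inl ⟨h1, h2⟩
  · exact absurd (noClaw hclaw hzv hzp hzr hvp hvr hpr hv_p hv_r hpr') False.elim

/-- every vertex is adjacent to both of one of the opposite pairs of any induced wheel -/
private lemma lemD (hconn : G.Connected) (hclaw : G.InducedFree clawGraph) (hcis : G.IsCIS)
    {p q r s t : V}
    (hpq : G.Adj p q) (hqr : G.Adj q r) (hrs : G.Adj r s) (hsp : G.Adj s p)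
    (hpr : ¬G.Adj p r) (hqs : ¬G.Adj q s) (hpr' : p ≠ r) (hqs' : q ≠ s)
    (htp : G.Adj t p) (htq : G.Adj t q) (htr : G.Adj t r) (hts : G.Adj t s)
    (v : V) :
    (G.Adj v p ∧ G.Adj v r) ∨ (G.Adj v q ∧ G.Adj v s) := by
  have step : ∀ z w, ((G.Adj z p ∧ G.Adj z r) ∨ (G.Adj z q ∧ G.Adj z s)) → G.Adj z w →
      ((G.Adj w p ∧ G.Adj w r) ∨ (G.Adj w q ∧ G.Adj w s)) := by
    rintro z w (⟨h1, h2⟩ | ⟨h1, h2⟩) hzw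
    · exact (stepAux hclaw hcis hpq hqr hrs hsp hpr hqs hpr' hqs'
        htp htq htr hts h1 h2 hzw).symm
    · rcases stepAux hclaw hcis hqr hrs hsp hpq hqs (fun h => hpr h.symm) hqs'
        (Ne.symm hpr') htq htr hts htp h1 h2 hzw with ⟨ha, hb⟩ | ⟨ha, hb⟩
      · exact Or.inl ⟨hb, ha⟩
      · exact Or.inr ⟨ha, hb⟩
  have mono : ∀ a b, (w : G.Walk a b) →
      ((G.Adj a p ∧ G.Adj a r) ∨ (G.Adj a q ∧ G.Adj a s)) →
      ((G.Adj b p ∧ G.Adj b r) ∨ (G.Adj b q ∧ G.Adj b s)) := by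
    intro a b w
    induction w with
    | nil => exact id
    | cons h w ih => exact fun ha => ih (step _ _ ha h)
  obtain ⟨w⟩ := hconn.preconnected p v
  exact mono _ _ w (Or.inr ⟨hpq, hsp.symm⟩)

/-- Lemma 2: any non-neighbor of p (other than p, r) is adjacent to q, r, s, t. -/
private lemma lem2 (hconn : G.Connected) (hclaw : G.InducedFree clawGraph) (hcis : G.IsCIS)
    {p q r s t : V}
    (hpq : G.Adj p q) (hqr : G.Adj q r) (hrs : G.Adj r s) (hsp : G.Adj s p)
    (hpr : ¬G.Adj p r) (hqs : ¬G.Adj q s) (hpr' : p ≠ r) (hqs' : q ≠ s)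
    (htp : G.Adj t p) (htq : G.Adj t q) (htr : G.Adj t r) (hts : G.Adj t s)
    {v : V} (hv_p : v ≠ p) (hv_r : v ≠ r) (hvp : ¬G.Adj v p) :
    G.Adj v q ∧ G.Adj v r ∧ G.Adj v s ∧ G.Adj v t := by
  rcases lemD hconn hclaw hcis hpq hqr hrs hsp hpr hqs hpr' hqs' htp htq htr hts v with
    ⟨h1, _⟩ | ⟨hvq, hvs⟩
  · exact absurd h1 hvp
  have hvr : G.Adj v r := by
    by_contra hvr
    exact noClaw hclaw hvq.symm hpq.symm hqr hvp hvr hpr hv_p hv_r hpr'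
  obtain ⟨_, _, hvt⟩ := lemma1 hclaw hcis hpq hqr hrs hsp hpr hqs hpr' hqs'
    htp htq htr hts hvr hvp
  exact ⟨hvq, hvr, hvs, hvt⟩

/-- vertex-level W4-freeness -/
private lemma noWheel (hconn : G.Connected) (hcoconn : Gᶜ.Connected)
    (hclaw : G.InducedFree clawGraph) (hcis : G.IsCIS)
    {p q r s t : V}
    (hpq : G.Adj p q) (hqr : G.Adj q r) (hrs : G.Adj r s) (hsp : G.Adj s p)
    (hpr : ¬G.Adj p r) (hqs : ¬G.Adj q s) (hpr' : p ≠ r) (hqs' : q ≠ s)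
    (htp : G.Adj t p) (htq : G.Adj t q) (htr : G.Adj t r) (hts : G.Adj t s) :
    False := by
  set J : V → Prop := fun x => G.Adj x q ∧ G.Adj x s ∧ G.Adj x t ∧
    ∃ y, G.Adj y q ∧ G.Adj y s ∧ G.Adj y t ∧ y ≠ x ∧ ¬G.Adj x y with hJ
  have hJp : J p := ⟨hpq, hsp.symm, htp.symm, r, hqr.symm, hrs, htr.symm, hpr'.symm, hpr⟩
  have step : ∀ x v, J x → Gᶜ.Adj x v → J v := by
    rintro x v ⟨hxq, hxs, hxt, y, hyq, hys, hyt, hyx, hxy⟩ hcadj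
    rw [compl_adj] at hcadj
    obtain ⟨hxv_ne, hxv⟩ := hcadj
    by_cases hvy : v = y
    · subst hvy
      exact ⟨hyq, hys, hyt, x, hxq, hxs, hxt, hyx.symm, fun h => hxy h.symm⟩
    · -- wheel (x, q, y, s; t), apply lem2 to v
      obtain ⟨hvq, hvy', hvs, hvt⟩ := lem2 hconn hclaw hcis
        (p := x) (q := q) (r := y) (s := s) (t := t)
        hxq hyq.symm hys hxs.symm hxy hqs hyx.symm hqs'
        hxt.symm htq hyt.symm hts
        (hxv_ne.symm) hvy (fun h => hxv h.symm)
      exact ⟨hvq, hvs, hvt, x, hxq, hxs, hxt, hxv_ne, fun h => hxv h.symm⟩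
  have mono : ∀ a b, (w : Gᶜ.Walk a b) → J a → J b := by
    intro a b w
    induction w with
    | nil => exact id
    | cons h w ih => exact fun ha => ih (step _ _ ha h)
  obtain ⟨w⟩ := hcoconn.preconnected p q
  exact G.irrefl (mono _ _ w hJp).1

end Core2

/-- Every connected and co-connected claw-free CIS graph is gem-free and `W₄`-free. -/
theorem stmt_4 {V : Type*} [Fintype V] (G : SimpleGraph V)
    (hconn : G.Connected) (hcoconn : Gᶜ.Connected)
    (hclaw : G.InducedFree clawGraph) (hcis : G.IsCIS) :
    G.InducedFree gemGraph ∧ G.InducedFree wheel4Graph := by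
  constructor
  · rintro sset ⟨e⟩
    set v : Fin 5 → V := fun i => (e i : V) with hv
    have hne : ∀ i j : Fin 5, i ≠ j → v i ≠ v j := by
      intro i j hij h
      exact hij (e.toEquiv.injective (Subtype.ext h))
    have hAdj : ∀ i j : Fin 5, G.Adj (v i) (v j) ↔ gemGraph.Adj i j := by
      intro i j
      exact e.map_adj_iff
    have hpat : ∀ i j : Fin 5, gemGraph.Adj i j ↔
        (i ≠ j ∧ ((j = 4 ∨ (i = 0 ∧ j = 1) ∨ (i = 1 ∧ j = 2) ∨ (i = 2 ∧ j = 3)) ∨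
          (i = 4 ∨ (j = 0 ∧ i = 1) ∨ (j = 1 ∧ i = 2) ∨ (j = 2 ∧ i = 3)))) := by
      intro i j
      simp [gemGraph, SimpleGraph.fromRel_adj]
    exact noGem hclaw hcis
      ((hAdj 0 1).mpr ((hpat 0 1).mpr (by decide)))
      ((hAdj 1 2).mpr ((hpat 1 2).mpr (by decide)))
      ((hAdj 2 3).mpr ((hpat 2 3).mpr (by decide)))
      (fun h => (by decide : ¬((0:Fin 5) ≠ 2 ∧ _)) ((hpat 0 2).mp ((hAdj 0 2).mp h)))
      (fun h => (by decide : ¬((0:Fin 5) ≠ 3 ∧ _)) ((hpat 0 3).mp ((hAdj 0 3).mp h)))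
      (fun h => (by decide : ¬((1:Fin 5) ≠ 3 ∧ _)) ((hpat 1 3).mp ((hAdj 1 3).mp h)))
      (hne 0 2 (by decide)) (hne 0 3 (by decide)) (hne 1 3 (by decide))
      ((hAdj 4 0).mpr ((hpat 4 0).mpr (by decide)))
      ((hAdj 4 1).mpr ((hpat 4 1).mpr (by decide)))
      ((hAdj 4 2).mpr ((hpat 4 2).mpr (by decide)))
      ((hAdj 4 3).mpr ((hpat 4 3).mpr (by decide)))
  · rintro sset ⟨e⟩
    set v : Fin 5 → V := fun i => (e i : V) with hv
    have hne : ∀ i j : Fin 5, i ≠ j → v i ≠ v j := by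
      intro i j hij h
      exact hij (e.toEquiv.injective (Subtype.ext h))
    have hAdj : ∀ i j : Fin 5, G.Adj (v i) (v j) ↔ wheel4Graph.Adj i j := by
      intro i j
      exact e.map_adj_iff
    have hpat : ∀ i j : Fin 5, wheel4Graph.Adj i j ↔
        (i ≠ j ∧ ((j = 4 ∨ (i = 0 ∧ j = 1) ∨ (i = 1 ∧ j = 2) ∨ (i = 2 ∧ j = 3) ∨ (i = 3 ∧ j = 0)) ∨
          (i = 4 ∨ (j = 0 ∧ i = 1) ∨ (j = 1 ∧ i = 2) ∨ (j = 2 ∧ i = 3) ∨ (j = 3 ∧ i = 0)))) := by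
      intro i j
      simp [wheel4Graph, SimpleGraph.fromRel_adj]
    exact noWheel hconn hcoconn hclaw hcis
      ((hAdj 0 1).mpr ((hpat 0 1).mpr (by decide)))
      ((hAdj 1 2).mpr ((hpat 1 2).mpr (by decide)))
      ((hAdj 2 3).mpr ((hpat 2 3).mpr (by decide)))
      ((hAdj 3 0).mpr ((hpat 3 0).mpr (by decide)))
      (fun h => (by decide : ¬((0:Fin 5) ≠ 2 ∧ _)) ((hpat 0 2).mp ((hAdj 0 2).mp h)))
      (fun h => (by decide : ¬((1:Fin 5) ≠ 3 ∧ _)) ((hpat 1 3).mp ((hAdj 1 3).mp h)))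
      (hne 0 2 (by decide)) (hne 1 3 (by decide))
      ((hAdj 4 0).mpr ((hpat 4 0).mpr (by decide)))
      ((hAdj 4 1).mpr ((hpat 4 1).mpr (by decide)))
      ((hAdj 4 2).mpr ((hpat 4 2).mpr (by decide)))
      ((hAdj 4 3).mpr ((hpat 4 3).mpr (by decide)))
end

section
/- For every n ≥ 1, the line graph L(K_{n,n}) of the complete bipartite graph K_{n,n} is a CIS graph. -/
open SimpleGraph

section Aux

variable {n : ℕ}

private abbrev KBB (n : ℕ) := completeBipartiteGraph (Fin n) (Fin n)

private lemma kbb_edge_char (e : Sym2 (Fin n ⊕ Fin n)) (he : e ∈ (KBB n).edgeSet) :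
    ∃ i j, e = s(Sum.inl i, Sum.inr j) := by
  induction e using Sym2.ind with
  | _ a b =>
    rw [SimpleGraph.mem_edgeSet] at he
    rcases a with i | i <;> rcases b with j | j <;>
      simp only [completeBipartiteGraph, Sum.isLeft, Sum.isRight] at he
    · simp at he
    · exact ⟨i, j, rfl⟩
    · exact ⟨j, i, Sym2.eq_swap⟩
    · simp at he

private noncomputable def rowOf (e : (KBB n).edgeSet) : Fin n :=
  (kbb_edge_char e.1 e.2).choose

private noncomputable def colOf (e : (KBB n).edgeSet) : Fin n :=
  (kbb_edge_char e.1 e.2).choose_spec.choose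

private lemma eq_edge (e : (KBB n).edgeSet) :
    (e : Sym2 (Fin n ⊕ Fin n)) = s(Sum.inl (rowOf e), Sum.inr (colOf e)) :=
  (kbb_edge_char e.1 e.2).choose_spec.choose_spec

private lemma mem_iff (e : (KBB n).edgeSet) (w : Fin n ⊕ Fin n) :
    w ∈ (e : Sym2 (Fin n ⊕ Fin n)) ↔ w = Sum.inl (rowOf e) ∨ w = Sum.inr (colOf e) := by
  conv_lhs => rw [eq_edge e]
  simp [Sym2.mem_iff]

private lemma row_mem (e : (KBB n).edgeSet) :
    Sum.inl (rowOf e) ∈ (e : Sym2 (Fin n ⊕ Fin n)) := by rw [mem_iff]; left; rfl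

private lemma col_mem (e : (KBB n).edgeSet) :
    Sum.inr (colOf e) ∈ (e : Sym2 (Fin n ⊕ Fin n)) := by rw [mem_iff]; right; rfl

private lemma row_eq {e : (KBB n).edgeSet} {i : Fin n}
    (h : Sum.inl i ∈ (e : Sym2 (Fin n ⊕ Fin n))) : rowOf e = i := by
  rw [mem_iff] at h
  rcases h with h | h
  · exact (Sum.inl.inj h).symm
  · exact absurd h (by simp)

private lemma col_eq {e : (KBB n).edgeSet} {j : Fin n}
    (h : Sum.inr j ∈ (e : Sym2 (Fin n ⊕ Fin n))) : colOf e = j := by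
  rw [mem_iff] at h
  rcases h with h | h
  · exact absurd h (by simp)
  · exact (Sum.inr.inj h).symm

private lemma ext_rc {e f : (KBB n).edgeSet}
    (hr : rowOf e = rowOf f) (hc : colOf e = colOf f) : e = f := by
  apply Subtype.ext
  rw [eq_edge e, eq_edge f, hr, hc]

private lemma adj_iff {e f : (KBB n).edgeSet} :
    (KBB n).lineGraph.Adj e f ↔ e ≠ f ∧ (rowOf e = rowOf f ∨ colOf e = colOf f) := by
  rw [SimpleGraph.lineGraph_adj_iff_exists]
  constructor
  · rintro ⟨hne, w, hw1, hw2⟩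
    refine ⟨hne, ?_⟩
    rw [mem_iff] at hw1 hw2
    rcases hw1 with h1 | h1 <;> rcases hw2 with h2 | h2 <;> rw [h1] at h2
    · exact Or.inl (Sum.inl.inj h2)
    · exact absurd h2 (by simp)
    · exact absurd h2 (by simp)
    · exact Or.inr (Sum.inr.inj h2)
  · rintro ⟨hne, h | h⟩
    · exact ⟨hne, Sum.inl (rowOf e), row_mem e, by rw [h]; exact row_mem f⟩
    · exact ⟨hne, Sum.inr (colOf e), col_mem e, by rw [h]; exact col_mem f⟩

/-- every clique in the line graph is a star -/
private lemma clique_star (hn : 1 ≤ n) (C : Set ((KBB n).edgeSet))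
    (hC : (KBB n).lineGraph.IsClique C) :
    ∃ v, ∀ e ∈ C, v ∈ (e : Sym2 (Fin n ⊕ Fin n)) := by
  rcases Set.eq_empty_or_nonempty C with h | ⟨e, he⟩
  · exact ⟨Sum.inl ⟨0, hn⟩, by simp [h]⟩
  by_cases hone : ∀ g ∈ C, g = e
  · exact ⟨Sum.inl (rowOf e), fun g hg => (hone g hg) ▸ row_mem e⟩
  push_neg at hone
  obtain ⟨f, hf, hfe⟩ := hone
  have hadj := hC hf he hfe
  rw [adj_iff] at hadj
  rcases hadj.2 with hr | hc
  · -- common row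
    have hcne : colOf f ≠ colOf e := fun hcc => hfe (ext_rc hr hcc)
    refine ⟨Sum.inl (rowOf e), fun g hg => ?_⟩
    suffices h : rowOf g = rowOf e by
      rw [mem_iff]; left; rw [h]
    by_cases hge : g = e
    · rw [hge]
    by_cases hgf : g = f
    · rw [hgf, hr]
    have h1 := hC hg he hge; rw [adj_iff] at h1
    have h2 := hC hg hf hgf; rw [adj_iff] at h2
    rcases h1.2 with h1 | h1
    · exact h1
    rcases h2.2 with h2 | h2
    · rw [h2, hr]
    · exact absurd (h2.symm.trans h1) hcne
  · -- common column
    have hrne : rowOf f ≠ rowOf e := fun hrr => hfe (ext_rc hrr hc)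
    refine ⟨Sum.inr (colOf e), fun g hg => ?_⟩
    suffices h : colOf g = colOf e by
      rw [mem_iff]; right; rw [h]
    by_cases hge : g = e
    · rw [hge]
    by_cases hgf : g = f
    · rw [hgf, hc]
    have h1 := hC hg he hge; rw [adj_iff] at h1
    have h2 := hC hg hf hgf; rw [adj_iff] at h2
    rcases h1.2 with h1 | h1
    · rcases h2.2 with h2 | h2
      · exact absurd (h2.symm.trans h1) hrne
      · rw [h2, hc]
    · exact h1

/-- every maximal stable set saturates every vertex -/
private lemma stable_saturates (S : Set ((KBB n).edgeSet))
    (hS : Maximal ((KBB n).lineGraph.IsStableSet) S) (v : Fin n ⊕ Fin n) :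
    ∃ f ∈ S, v ∈ (f : Sym2 (Fin n ⊕ Fin n)) := by
  rcases v with i | i
  · -- left vertex: need f ∈ S with rowOf f = i
    by_contra h
    push_neg at h
    have h1 : ∀ f ∈ S, rowOf f ≠ i := by
      intro f hf hri
      exact h f hf (hri ▸ row_mem f)
    -- Step A: every column is saturated
    have hA : ∀ j : Fin n, ∃ f ∈ S, colOf f = j := by
      intro j
      by_contra hj
      push_neg at hj
      have hg : (KBB n).Adj (Sum.inl i) (Sum.inr j) := Or.inl ⟨rfl, rfl⟩
      set g : (KBB n).edgeSet := ⟨s(Sum.inl i, Sum.inr j), hg⟩ with hgdef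
      have hgr : rowOf g = i := row_eq (by simp [hgdef])
      have hgc : colOf g = j := col_eq (by simp [hgdef])
      have hstab : (KBB n).lineGraph.IsStableSet (insert g S) := by
        intro x hx y hy hxy hadj
        rw [adj_iff] at hadj
        rcases hx with hx | hx <;> rcases hy with hy | hy
        · exact hxy (hx.trans hy.symm)
        · rcases hadj.2 with hh | hh
          · exact h1 y hy (by rw [← hh, hx, hgr])
          · exact hj y hy (by rw [← hh, hx, hgc])
        · rcases hadj.2 with hh | hh
          · exact h1 x hx (by rw [hh, hy, hgr])
          · exact hj x hx (by rw [hh, hy, hgc])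
        · exact hS.1 hx hy hxy (adj_iff.mpr hadj)
      have hsub := hS.2 hstab (Set.subset_insert g S)
      exact h1 g (hsub (Set.mem_insert g S)) hgr
    -- Step B: injectivity argument
    choose φ hφS hφc using hA
    have hinj : Function.Injective (fun j => rowOf (φ j)) := by
      intro j₁ j₂ hj
      simp only at hj
      have heq : φ j₁ = φ j₂ := by
        by_contra hne
        exact hS.1 (hφS j₁) (hφS j₂) hne (adj_iff.mpr ⟨hne, Or.inl hj⟩)
      rw [← hφc j₁, ← hφc j₂, heq]
    obtain ⟨j, hj⟩ := Finite.surjective_of_injective hinj i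
    exact h1 (φ j) (hφS j) hj
  · -- right vertex: symmetric
    by_contra h
    push_neg at h
    have h1 : ∀ f ∈ S, colOf f ≠ i := by
      intro f hf hri
      exact h f hf (hri ▸ col_mem f)
    have hA : ∀ j : Fin n, ∃ f ∈ S, rowOf f = j := by
      intro j
      by_contra hj
      push_neg at hj
      have hg : (KBB n).Adj (Sum.inl j) (Sum.inr i) := Or.inl ⟨rfl, rfl⟩
      set g : (KBB n).edgeSet := ⟨s(Sum.inl j, Sum.inr i), hg⟩ with hgdef
      have hgr : rowOf g = j := row_eq (by simp [hgdef])
      have hgc : colOf g = i := col_eq (by simp [hgdef])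
      have hstab : (KBB n).lineGraph.IsStableSet (insert g S) := by
        intro x hx y hy hxy hadj
        rw [adj_iff] at hadj
        rcases hx with hx | hx <;> rcases hy with hy | hy
        · exact hxy (hx.trans hy.symm)
        · rcases hadj.2 with hh | hh
          · exact hj y hy (by rw [← hh, hx, hgr])
          · exact h1 y hy (by rw [← hh, hx, hgc])
        · rcases hadj.2 with hh | hh
          · exact hj x hx (by rw [hh, hy, hgr])
          · exact h1 x hx (by rw [hh, hy, hgc])
        · exact hS.1 hx hy hxy (adj_iff.mpr hadj)
      have hsub := hS.2 hstab (Set.subset_insert g S)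
      exact hj g (hsub (Set.mem_insert g S)) hgr
    choose φ hφS hφr using hA
    have hinj : Function.Injective (fun j => colOf (φ j)) := by
      intro j₁ j₂ hj
      simp only at hj
      have heq : φ j₁ = φ j₂ := by
        by_contra hne
        exact hS.1 (hφS j₁) (hφS j₂) hne (adj_iff.mpr ⟨hne, Or.inr hj⟩)
      rw [← hφr j₁, ← hφr j₂, heq]
    obtain ⟨j, hj⟩ := Finite.surjective_of_injective hinj i
    exact h1 (φ j) (hφS j) hj

end Aux

/-- For every `n ≥ 1`, the line graph of `K_{n,n}` is a CIS graph. -/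

theorem stmt_6 (n : ℕ) (hn : 1 ≤ n) :
    ((completeBipartiteGraph (Fin n) (Fin n)).lineGraph).IsCIS := by
  intro C S hC hS
  obtain ⟨v, hv⟩ := clique_star hn C hC.1
  obtain ⟨f, hfS, hfv⟩ := stable_saturates S hS v
  have hclq : ((KBB n).lineGraph).IsClique (insert f C) := by
    intro x hx y hy hxy
    rcases hx with hx | hx <;> rcases hy with hy | hy
    · exact absurd (hx.trans hy.symm) hxy
    · exact SimpleGraph.lineGraph_adj_iff_exists.mpr ⟨hxy, v, hx ▸ hfv, hv y hy⟩
    · exact SimpleGraph.lineGraph_adj_iff_exists.mpr ⟨hxy, v, hv x hx, hy ▸ hfv⟩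
    · exact hC.1 hx hy hxy
  exact ⟨f, hC.2 hclq (Set.subset_insert f C) (Set.mem_insert f C), hfS⟩
end

section
/- Let H be a finite connected randomly internally matchable simple graph and let w : E(H) → ℕ assign a positive integer weight to each edge. Then the total weight of all edges satisfies Σ_{e ∈ E(H)} w(e) ≤ Δ_w(H) · ν(H), where Δ_w(H) = max_{v ∈ V(H)} Σ_{e incident to v} w(e) is the maximum weighted degree and ν(H) is the matching number of H. -/
open SimpleGraph

lemma swap_sum {V : Type*} [Fintype V] [DecidableEq V] (E : Finset (Sym2 V)) (A : Finset V)
    (w : Sym2 V → ℕ) :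
    ∑ e ∈ E, (A.filter (· ∈ e)).card * w e
      = ∑ v ∈ A, ∑ e ∈ E.filter (fun e => v ∈ e), w e := by
  calc ∑ e ∈ E, (A.filter (· ∈ e)).card * w e
      = ∑ e ∈ E, ∑ v ∈ A, (if v ∈ e then w e else 0) := by
        refine Finset.sum_congr rfl fun e _ => ?_
        rw [← Finset.sum_filter, Finset.sum_const, smul_eq_mul]
    _ = ∑ v ∈ A, ∑ e ∈ E, (if v ∈ e then w e else 0) := Finset.sum_comm
    _ = ∑ v ∈ A, ∑ e ∈ E.filter (fun e => v ∈ e), w e := by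
        refine Finset.sum_congr rfl fun v _ => ?_
        rw [Finset.sum_filter]


/-- For a finite connected randomly internally matchable graph `H` with
positive integer edge weights `w`, the total edge weight is at most `Δ_w(H) · ν(H)`. -/
theorem stmt_12 {V : Type*} [Fintype V] [DecidableEq V] (H : SimpleGraph V)
    [DecidableRel H.Adj] (hconn : H.Connected) (hrim : H.RandomlyInternallyMatchable)
    (w : Sym2 V → ℕ) (hw : ∀ e ∈ H.edgeSet, 1 ≤ w e) :
    ∑ e ∈ H.edgeFinset, w e ≤
      (Finset.univ.sup fun v : V => ∑ e ∈ H.incidenceFinset v, w e) * H.matchingNumber := by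
  classical
  set Δ := Finset.univ.sup fun v : V => ∑ e ∈ H.incidenceFinset v, w e with hΔ
  by_cases hE : H.edgeFinset = ∅
  · simp [hE]
  obtain ⟨e₀, he₀⟩ := Finset.nonempty_iff_ne_empty.2 hE
  rw [mem_edgeFinset] at he₀
  -- matching number basics
  have hbdd : BddAbove {n | ∃ M : Set (Sym2 V), H.IsMatchingSet M ∧ M.ncard = n} := by
    refine ⟨Fintype.card (Sym2 V), ?_⟩
    rintro n ⟨M, -, rfl⟩
    simpa [Set.ncard_univ, Nat.card_eq_fintype_card] using
      Set.ncard_le_ncard (Set.subset_univ M) (Set.toFinite _)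
  have h0 : 0 ∈ {n | ∃ M : Set (Sym2 V), H.IsMatchingSet M ∧ M.ncard = n} :=
    ⟨∅, ⟨Set.empty_subset _, by simp⟩, by simp⟩
  obtain ⟨M₀, hM₀, hcard₀⟩ : ∃ M : Set (Sym2 V), H.IsMatchingSet M ∧ M.ncard = H.matchingNumber :=
    Nat.sSup_mem ⟨0, h0⟩ hbdd
  have hle : ∀ N : Set (Sym2 V), H.IsMatchingSet N → N.ncard ≤ H.matchingNumber :=
    fun N hN => le_csSup hbdd ⟨N, hN, rfl⟩
  have hν1 : 1 ≤ H.matchingNumber := by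
    refine le_csSup hbdd ⟨{e₀}, ⟨?_, ?_⟩, Set.ncard_singleton _⟩
    · simpa using he₀
    · intro e he f hf hne
      simp only [Set.mem_singleton_iff] at he hf
      subst he; subst hf
      exact absurd rfl hne
  -- maximum matchings are maximal
  have hmaximal : ∀ N : Set (Sym2 V), H.IsMatchingSet N → N.ncard = H.matchingNumber →
      Maximal H.IsMatchingSet N := by
    intro N hN hcard
    refine ⟨hN, fun N' hN' hsub => ?_⟩
    have hNN : N = N' :=
      Set.eq_of_subset_of_ncard_le hsub (hcard ▸ hle N' hN') (Set.toFinite _)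
    exact hNN ▸ le_refl _
  set Int : V → Prop := fun v => 2 ≤ (H.neighborSet v).ncard with hIntdef
  have hsat : ∀ v, Int v → ∃ e ∈ M₀, v ∈ e :=
    fun v hv => (hrim M₀ (hmaximal M₀ hM₀ hcard₀)).2 v hv
  have huniq : ∀ {e f : Sym2 V}, e ∈ M₀ → f ∈ M₀ → ∀ {v : V}, v ∈ e → v ∈ f → e = f := by
    intro e f he hf v hve hvf
    by_contra hne
    exact hM₀.2 e he f hf hne v ⟨hve, hvf⟩
  have hnbr : ∀ {a b : V}, H.Adj a b → ¬ Int a → H.neighborSet a = {b} := by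
    intro a b hab ha
    have h1 : (H.neighborSet a).ncard ≤ 1 := by
      by_contra h
      exact ha (by omega)
    have h2 : 1 ≤ (H.neighborSet a).ncard := by
      rw [← Set.ncard_singleton b]
      exact Set.ncard_le_ncard (by simpa using hab) (Set.toFinite _)
    obtain ⟨c, hc⟩ := Set.ncard_eq_one.1 (le_antisymm h1 h2)
    have hbc : b = c := by
      have := hab
      rw [← SimpleGraph.mem_neighborSet, hc, Set.mem_singleton_iff] at this
      exact this
    rw [hc, hbc]
  by_cases hB : ∀ a b : V, H.Adj a b → Int a ∨ Int b
  · -- main case: every edge has an internal endpoint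
    set I : Finset V := Finset.univ.filter Int with hI
    set Iℓ : Finset V := I.filter (fun v => ∃ x, H.Adj v x ∧ ¬ Int x) with hIl
    -- key swap lemma: the M₀-partner of a vertex of Iℓ is not internal
    have hkey : ∀ v, v ∈ Iℓ → ∀ e ∈ M₀, v ∈ e → ∀ y, e = s(v, y) → ¬ Int y := by
      intro v hv e heM hve y hey hIy
      rw [hIl, Finset.mem_filter] at hv
      obtain ⟨hvI, x, hvx, hIx⟩ := hv
      have hadjvy : H.Adj v y := by
        have := hM₀.1 heM; rwa [hey, H.mem_edgeSet] at this
      have hxy : x ≠ y := fun h => hIx (h ▸ hIy)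
      have hxv : x ≠ v := hvx.ne'
      have hxuns : ∀ f ∈ M₀, x ∉ f := by
        intro f hf hxf
        obtain ⟨z, hz⟩ := Sym2.mem_iff_exists.1 hxf
        have hadjxz : H.Adj x z := by
          have := hM₀.1 hf; rwa [hz, H.mem_edgeSet] at this
        have hzv : z = v := by
          have hmem : z ∈ H.neighborSet x := hadjxz
          rwa [hnbr hvx.symm hIx, Set.mem_singleton_iff] at hmem
        have hfe : f ≠ e := by
          intro h
          rw [hz, hzv, hey, Sym2.eq_iff] at h
          rcases h with ⟨h1, h2⟩ | ⟨h1, h2⟩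
          · exact hxv h1
          · exact hxy h1
        exact hfe (huniq hf heM (by rw [hz, hzv]; exact Sym2.mem_mk_right x v) hve)
      set M' : Set (Sym2 V) := insert s(v, x) (M₀ \ {e}) with hM'
      have hnotmem : s(v, x) ∉ M₀ \ {e} := fun h => hxuns _ h.1 (Sym2.mem_mk_right v x)
      have hM'match : H.IsMatchingSet M' := by
        constructor
        · rw [hM']
          exact Set.insert_subset (H.mem_edgeSet.2 hvx) (Set.diff_subset.trans hM₀.1)
        · intro f hf g hg hne u hu
          rw [hM', Set.mem_insert_iff] at hf hg
          rcases hf with rfl | hf <;> rcases hg with rfl | hg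
          · exact hne rfl
          · rcases Sym2.mem_iff.1 hu.1 with h | h
            · exact hg.2 (Set.mem_singleton_iff.2 (huniq hg.1 heM (h ▸ hu.2) hve))
            · exact hxuns g hg.1 (h ▸ hu.2)
          · rcases Sym2.mem_iff.1 hu.2 with h | h
            · exact hf.2 (Set.mem_singleton_iff.2 (huniq hf.1 heM (h ▸ hu.1) hve))
            · exact hxuns f hf.1 (h ▸ hu.1)
          · exact hM₀.2 f hf.1 g hg.1 hne u hu
      have hM'card : M'.ncard = H.matchingNumber := by
        have hpos : 1 ≤ M₀.ncard := (Set.ncard_pos (Set.toFinite M₀)).2 ⟨e, heM⟩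
        rw [hM', Set.ncard_insert_of_notMem hnotmem (Set.toFinite _),
            Set.ncard_diff_singleton_of_mem heM]
        omega
      obtain ⟨g, hg, hyg⟩ := (hrim M' (hmaximal M' hM'match hM'card)).2 y hIy
      rw [hM', Set.mem_insert_iff] at hg
      rcases hg with rfl | hg
      · rcases Sym2.mem_iff.1 hyg with h | h
        · exact hadjvy.ne h.symm
        · exact hIx (h ▸ hIy)
      · have hge : g = e := huniq hg.1 heM hyg (by rw [hey]; exact Sym2.mem_mk_right v y)
        exact hg.2 (Set.mem_singleton_iff.2 hge)
    -- the maximum matching as a finset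
    set Mfin : Finset (Sym2 V) := (Set.toFinite M₀).toFinset with hMfin
    have hMfinmem : ∀ {e : Sym2 V}, e ∈ Mfin ↔ e ∈ M₀ := fun {e} => Set.Finite.mem_toFinset _
    have hMfincard : Mfin.card = H.matchingNumber := by
      rw [← hcard₀, Set.ncard_eq_toFinset_card M₀ (Set.toFinite M₀)]
    have hfMex : ∀ v ∈ I, ∃ e, e ∈ M₀ ∧ v ∈ e := by
      intro v hv
      rw [hI, Finset.mem_filter] at hv
      obtain ⟨e, he, hve⟩ := hsat v hv.2
      exact ⟨e, he, hve⟩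
    haveI : Nonempty (Sym2 V) := ⟨e₀⟩
    choose! fM hfM1 hfM2 using hfMex
    have hIsub : Iℓ ⊆ I := Finset.filter_subset _ _
    have hIcount : I.card + Iℓ.card ≤ 2 * H.matchingNumber := by
      have hmapI : ∀ v ∈ I, fM v ∈ Mfin := fun v hv => hMfinmem.2 (hfM1 v hv)
      have hmapIl : ∀ v ∈ Iℓ, fM v ∈ Mfin := fun v hv => hmapI v (hIsub hv)
      rw [Finset.card_eq_sum_card_fiberwise hmapI, Finset.card_eq_sum_card_fiberwise hmapIl,
          ← Finset.sum_add_distrib]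
      have hper : ∀ m ∈ Mfin,
          (I.filter fun v => fM v = m).card + (Iℓ.filter fun v => fM v = m).card ≤ 2 := by
        intro m hm
        have hmM : m ∈ M₀ := hMfinmem.1 hm
        by_cases hex : (Iℓ.filter fun v => fM v = m).Nonempty
        · obtain ⟨v, hv⟩ := hex
          rw [Finset.mem_filter] at hv
          obtain ⟨hvIl, hfv⟩ := hv
          have hvI : v ∈ I := hIsub hvIl
          have hvm : v ∈ m := hfv ▸ hfM2 v hvI
          obtain ⟨y, hy⟩ := Sym2.mem_iff_exists.1 hvm
          have hyint : ¬ Int y := hkey v hvIl m hmM hvm y hy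
          have hsub1 : (I.filter fun u => fM u = m) ⊆ {v} := by
            intro u hu
            rw [Finset.mem_filter] at hu
            have hum : u ∈ m := hu.2 ▸ hfM2 u hu.1
            rw [hy, Sym2.mem_iff] at hum
            rcases hum with rfl | rfl
            · exact Finset.mem_singleton_self _
            · exfalso
              apply hyint
              have h := hu.1
              rw [hI, Finset.mem_filter] at h
              exact h.2
          have hc1 := Finset.card_le_card hsub1
          have hc2 := Finset.card_le_card
            ((Finset.filter_subset_filter _ hIsub).trans hsub1)
          simp only [Finset.card_singleton] at hc1 hc2
          omega
        · rw [Finset.not_nonempty_iff_eq_empty] at hex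
          rw [hex, Finset.card_empty]
          obtain ⟨⟨x, y⟩, hxy⟩ := m.exists_rep
          have hsub2 : (I.filter fun u => fM u = m) ⊆ {x, y} := by
            intro u hu
            rw [Finset.mem_filter] at hu
            have hum : u ∈ m := hu.2 ▸ hfM2 u hu.1
            rw [← hxy, Sym2.mem_iff] at hum
            rcases hum with rfl | rfl
            · exact Finset.mem_insert_self _ _
            · exact Finset.mem_insert_of_mem (Finset.mem_singleton_self _)
          have hc3 := Finset.card_le_card hsub2
          have hc4 : ({x, y} : Finset V).card ≤ 2 := by
            have := Finset.card_insert_le x ({y} : Finset V)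
            simpa using this
          omega
      calc ∑ m ∈ Mfin,
            ((I.filter fun v => fM v = m).card + (Iℓ.filter fun v => fM v = m).card)
          ≤ ∑ _m ∈ Mfin, 2 := Finset.sum_le_sum hper
        _ = 2 * H.matchingNumber := by
            rw [Finset.sum_const, smul_eq_mul, hMfincard, mul_comm]
    -- per-edge weight identity
    have hedge : ∀ e ∈ H.edgeFinset,
        (I.filter (· ∈ e)).card * w e + (if ∃ u ∈ e, ¬ Int u then w e else 0) = 2 * w e := by
      intro e
      induction e using Sym2.ind with
      | _ a b =>
        intro he
        rw [mem_edgeFinset, H.mem_edgeSet] at he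
        have hne : a ≠ b := he.ne
        by_cases hIa : Int a <;> by_cases hIb : Int b
        · have hfil : I.filter (· ∈ s(a, b)) = {a, b} := by
            ext u
            simp only [Finset.mem_filter, hI, Finset.mem_univ, true_and, Sym2.mem_iff,
              Finset.mem_insert, Finset.mem_singleton]
            constructor
            · rintro ⟨-, h⟩; exact h
            · rintro (rfl | rfl)
              · exact ⟨hIa, Or.inl rfl⟩
              · exact ⟨hIb, Or.inr rfl⟩
          rw [hfil, if_neg, Finset.card_insert_of_notMem (by simpa using hne),
            Finset.card_singleton]
          · ring
          · rintro ⟨u, hu, hIu⟩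
            rw [Sym2.mem_iff] at hu
            rcases hu with rfl | rfl
            · exact hIu hIa
            · exact hIu hIb
        · have hfil : I.filter (· ∈ s(a, b)) = {a} := by
            ext u
            simp only [Finset.mem_filter, hI, Finset.mem_univ, true_and, Sym2.mem_iff,
              Finset.mem_singleton]
            constructor
            · rintro ⟨hIu, rfl | rfl⟩
              · rfl
              · exact absurd hIu hIb
            · rintro rfl
              exact ⟨hIa, Or.inl rfl⟩
          rw [hfil, if_pos ⟨b, Sym2.mem_mk_right a b, hIb⟩, Finset.card_singleton]
          ring
        · have hfil : I.filter (· ∈ s(a, b)) = {b} := by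
            ext u
            simp only [Finset.mem_filter, hI, Finset.mem_univ, true_and, Sym2.mem_iff,
              Finset.mem_singleton]
            constructor
            · rintro ⟨hIu, rfl | rfl⟩
              · exact absurd hIu hIa
              · rfl
            · rintro rfl
              exact ⟨hIb, Or.inr rfl⟩
          rw [hfil, if_pos ⟨a, Sym2.mem_mk_left a b, hIa⟩, Finset.card_singleton]
          ring
        · rcases hB a b he with h | h
          · exact absurd h hIa
          · exact absurd h hIb
    -- degree bound
    have hdeg : ∀ v : V, ∑ e ∈ H.edgeFinset.filter (fun e => v ∈ e), w e ≤ Δ := by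
      intro v
      have hfil : H.edgeFinset.filter (fun e => v ∈ e) = H.incidenceFinset v :=
        (H.incidenceFinset_eq_filter v).symm
      rw [hfil, hΔ]
      exact Finset.le_sup (f := fun v : V => ∑ e ∈ H.incidenceFinset v, w e) (Finset.mem_univ v)
    have h1 : ∑ e ∈ H.edgeFinset, (I.filter (· ∈ e)).card * w e ≤ Δ * I.card := by
      rw [swap_sum]
      calc ∑ v ∈ I, ∑ e ∈ H.edgeFinset.filter (fun e => v ∈ e), w e
          ≤ ∑ _v ∈ I, Δ := Finset.sum_le_sum fun v _ => hdeg v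
        _ = I.card * Δ := by rw [Finset.sum_const, smul_eq_mul]
        _ = Δ * I.card := mul_comm _ _
    have h2 : ∑ e ∈ H.edgeFinset, (if ∃ u ∈ e, ¬ Int u then w e else 0) ≤ Δ * Iℓ.card := by
      have hpt : ∀ e ∈ H.edgeFinset,
          (if ∃ u ∈ e, ¬ Int u then w e else 0) ≤ (Iℓ.filter (· ∈ e)).card * w e := by
        intro e
        induction e using Sym2.ind with
        | _ a b =>
          intro he
          rw [mem_edgeFinset, H.mem_edgeSet] at he
          split_ifs with h
          · obtain ⟨u, hu, hIu⟩ := h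
            rw [Sym2.mem_iff] at hu
            have hex : ∃ o, o ∈ Iℓ ∧ o ∈ s(a, b) := by
              rcases hu with rfl | rfl
              · have hIb : Int b := (hB u b he).resolve_left hIu
                refine ⟨b, ?_, Sym2.mem_mk_right u b⟩
                rw [hIl, Finset.mem_filter]
                refine ⟨?_, u, he.symm, hIu⟩
                rw [hI, Finset.mem_filter]
                exact ⟨Finset.mem_univ b, hIb⟩
              · have hIa : Int a := (hB a u he).resolve_right hIu
                refine ⟨a, ?_, Sym2.mem_mk_left a u⟩
                rw [hIl, Finset.mem_filter]
                refine ⟨?_, u, he, hIu⟩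
                rw [hI, Finset.mem_filter]
                exact ⟨Finset.mem_univ a, hIa⟩
            obtain ⟨o, ho, hoe⟩ := hex
            have hpos : 0 < (Iℓ.filter (· ∈ s(a, b))).card :=
              Finset.card_pos.2 ⟨o, Finset.mem_filter.2 ⟨ho, hoe⟩⟩
            exact Nat.le_mul_of_pos_left _ hpos
          · exact Nat.zero_le _
      calc ∑ e ∈ H.edgeFinset, (if ∃ u ∈ e, ¬ Int u then w e else 0)
          ≤ ∑ e ∈ H.edgeFinset, (Iℓ.filter (· ∈ e)).card * w e := Finset.sum_le_sum hpt
        _ = ∑ v ∈ Iℓ, ∑ e ∈ H.edgeFinset.filter (fun e => v ∈ e), w e := swap_sum _ _ _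
        _ ≤ ∑ _v ∈ Iℓ, Δ := Finset.sum_le_sum fun v _ => hdeg v
        _ = Iℓ.card * Δ := by rw [Finset.sum_const, smul_eq_mul]
        _ = Δ * Iℓ.card := mul_comm _ _
    have main2 : 2 * ∑ e ∈ H.edgeFinset, w e ≤ 2 * (Δ * H.matchingNumber) := by
      calc 2 * ∑ e ∈ H.edgeFinset, w e
          = ∑ e ∈ H.edgeFinset, 2 * w e := Finset.mul_sum _ _ _
        _ = ∑ e ∈ H.edgeFinset,
              ((I.filter (· ∈ e)).card * w e + (if ∃ u ∈ e, ¬ Int u then w e else 0)) :=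
            Finset.sum_congr rfl fun e he => (hedge e he).symm
        _ = (∑ e ∈ H.edgeFinset, (I.filter (· ∈ e)).card * w e)
              + ∑ e ∈ H.edgeFinset, (if ∃ u ∈ e, ¬ Int u then w e else 0) :=
            Finset.sum_add_distrib
        _ ≤ Δ * I.card + Δ * Iℓ.card := add_le_add h1 h2
        _ = Δ * (I.card + Iℓ.card) := (mul_add _ _ _).symm
        _ ≤ Δ * (2 * H.matchingNumber) := Nat.mul_le_mul_left _ hIcount
        _ = 2 * (Δ * H.matchingNumber) := by ring
    omega
  · -- K₂ case
    push_neg at hB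
    obtain ⟨a, b, hab, ha, hb⟩ := hB
    have step : ∀ (u z : V) (p : H.Walk u z), (u = a ∨ u = b) → (z = a ∨ z = b) := by
      intro u z p
      induction p with
      | nil => exact id
      | @cons u c z h p ih =>
        intro hu
        apply ih
        rcases hu with rfl | rfl
        · right
          have : c ∈ H.neighborSet u := h
          rwa [hnbr hab ha, Set.mem_singleton_iff] at this
        · left
          have : c ∈ H.neighborSet u := h
          rwa [hnbr hab.symm hb, Set.mem_singleton_iff] at this
    have hVab : ∀ z : V, z = a ∨ z = b := by
      intro z
      obtain ⟨p⟩ := hconn.preconnected a z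
      exact step a z p (Or.inl rfl)
    have hEsub : H.edgeFinset ⊆ {s(a, b)} := by
      intro f hf
      rw [Finset.mem_singleton]
      rw [mem_edgeFinset] at hf
      induction f using Sym2.ind with
      | _ x y =>
        have hxy : H.Adj x y := hf
        rcases hVab x with rfl | rfl <;> rcases hVab y with rfl | rfl
        · exact absurd rfl hxy.ne
        · rfl
        · exact Sym2.eq_swap
        · exact absurd rfl hxy.ne
    calc ∑ e ∈ H.edgeFinset, w e ≤ ∑ e ∈ ({s(a, b)} : Finset (Sym2 V)), w e :=
          Finset.sum_le_sum_of_subset hEsub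
      _ = w s(a, b) := Finset.sum_singleton _ _
      _ ≤ ∑ e ∈ H.incidenceFinset a, w e := by
          refine Finset.single_le_sum (fun _ _ => Nat.zero_le _) ?_
          rw [mem_incidenceFinset]
          exact ⟨H.mem_edgeSet.2 hab, Sym2.mem_mk_left a b⟩
      _ ≤ Δ := by rw [hΔ]; exact Finset.le_sup (f := fun v : V => ∑ e ∈ H.incidenceFinset v, w e) (Finset.mem_univ a)
      _ = Δ * 1 := (mul_one Δ).symm
      _ ≤ Δ * H.matchingNumber := Nat.mul_le_mul_left Δ hν1
end

section
/- Let H be a finite connected triangle-free simple graph with at least one edge and let G = L(H) be its line graph. If G is CIS, then |V(G)| ≤ α(G) · ω(G), where α(G) is the stability number and ω(G) is the clique number of G. -/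
open SimpleGraph

namespace Stmt13Aux

open Finset

variable {V : Type*}

/-- Any clique's size bounds the clique number from below (finite vertex type). -/
lemma le_cliqueNumber {W : Type*} [Finite W] (G : SimpleGraph W) {C : Set W}
    (hC : G.IsClique C) : C.ncard ≤ G.cliqueNumber := by
  apply le_csSup
  · refine ⟨Nat.card W, ?_⟩
    rintro n ⟨S, -, rfl⟩
    calc S.ncard ≤ (Set.univ : Set W).ncard :=
          Set.ncard_le_ncard (Set.subset_univ S) Set.finite_univ
      _ = Nat.card W := Set.ncard_univ W
  · exact ⟨C, hC, rfl⟩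

lemma le_stabilityNumber {W : Type*} [Finite W] (G : SimpleGraph W) {S : Set W}
    (hS : G.IsStableSet S) : S.ncard ≤ G.stabilityNumber := by
  apply le_csSup
  · refine ⟨Nat.card W, ?_⟩
    rintro n ⟨T, -, rfl⟩
    calc T.ncard ≤ (Set.univ : Set W).ncard :=
          Set.ncard_le_ncard (Set.subset_univ T) Set.finite_univ
      _ = Nat.card W := Set.ncard_univ W
  · exact ⟨S, hS, rfl⟩

/-- Walks starting at an endpoint of a `K₂`-like edge never leave `{x, y}`. -/
lemma walk_stuck {H : SimpleGraph V} {x y : V}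
    (hx : ∀ u, H.Adj x u → u = y) (hy : ∀ u, H.Adj y u → u = x) :
    ∀ n {z : V} (w : H.Walk x z), w.length ≤ n → z = x ∨ z = y := by
  intro n
  induction n with
  | zero =>
    intro z w hw
    cases w with
    | nil => exact Or.inl rfl
    | cons h p => simp [SimpleGraph.Walk.length_cons] at hw
  | succ n ih =>
    intro z w hw
    cases w with
    | nil => exact Or.inl rfl
    | @cons _ b _ h p =>
      have hb := hx _ h
      subst hb
      cases p with
      | nil => exact Or.inr rfl
      | @cons _ c _ h2 q =>
        have hc := hy _ h2
        subst hc
        apply ih q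
        simp only [SimpleGraph.Walk.length_cons] at hw
        omega

/-- A matching yields a stable set of the line graph of equal size. -/
lemma matching_stable {H : SimpleGraph V} {M : Set (Sym2 V)} (hM : H.IsMatchingSet M) :
    H.lineGraph.IsStableSet {e : H.edgeSet | (e : Sym2 V) ∈ M} ∧
      {e : H.edgeSet | (e : Sym2 V) ∈ M}.ncard = M.ncard := by
  constructor
  · intro e he f hf hef hadj
    rw [SimpleGraph.lineGraph_adj_iff_exists] at hadj
    obtain ⟨-, v, hv1, hv2⟩ := hadj
    exact hM.2 e he f hf (fun h => hef (Subtype.ext h)) v ⟨hv1, hv2⟩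
  · have himg : Subtype.val '' {e : H.edgeSet | (e : Sym2 V) ∈ M} = M := by
      ext e
      constructor
      · rintro ⟨f, hf, rfl⟩; exact hf
      · intro he; exact ⟨⟨e, hM.1 he⟩, he, rfl⟩
    have h2 := Set.ncard_image_of_injective {e : H.edgeSet | (e : Sym2 V) ∈ M}
      Subtype.val_injective
    rw [himg] at h2
    exact h2.symm

end Stmt13Aux

open Stmt13Aux Finset in
/-- If `H` is a finite connected triangle-free graph with at least one edge
and `G = L(H)` is CIS, then `|V(G)| ≤ α(G) · ω(G)`. -/
theorem stmt_13 {V : Type*} [Fintype V] (H : SimpleGraph V)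
    (hconn : H.Connected) (htri : H.CliqueFree 3) (hedge : H.edgeSet.Nonempty)
    (hcis : H.lineGraph.IsCIS) :
    Nat.card H.edgeSet ≤ H.lineGraph.stabilityNumber * H.lineGraph.cliqueNumber := by
  classical
  -- An adjacency witness
  obtain ⟨e0, he0⟩ := hedge
  obtain ⟨x0, y0, hxy0⟩ : ∃ x y : V, H.Adj x y := by
    induction e0 using Sym2.ind with
    | _ x y => exact ⟨x, y, H.mem_edgeSet.mp he0⟩
  haveI : Nonempty V := ⟨x0⟩
  -- max degree
  obtain ⟨w, -, hw⟩ := Finset.exists_max_image (Finset.univ : Finset V)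
    (fun v => H.degree v) ⟨x0, Finset.mem_univ x0⟩
  set Δ := H.degree w with hΔdef
  have hΔ : ∀ v : V, H.degree v ≤ Δ := fun v => hw v (Finset.mem_univ v)
  -- Nat.card edgeSet = edgeFinset.card
  have hEcard : Nat.card H.edgeSet = H.edgeFinset.card := by
    rw [Nat.card_coe_set_eq, Set.ncard_eq_toFinset_card']
    congr 1
  -- ω ≥ Δ
  have homega : Δ ≤ H.lineGraph.cliqueNumber := by
    have hclique : H.lineGraph.IsClique {e : H.edgeSet | w ∈ (e : Sym2 V)} := by
      intro e he f hf hef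
      rw [SimpleGraph.lineGraph_adj_iff_exists]
      exact ⟨hef, w, he, hf⟩
    have hcard : {e : H.edgeSet | w ∈ (e : Sym2 V)}.ncard = Δ := by
      have himg : Subtype.val '' {e : H.edgeSet | w ∈ (e : Sym2 V)} = H.incidenceSet w := by
        ext e
        constructor
        · rintro ⟨f, hf, rfl⟩; exact ⟨f.2, hf⟩
        · rintro ⟨he, hw'⟩; exact ⟨⟨e, he⟩, hw', rfl⟩
      have h2 := Set.ncard_image_of_injective {e : H.edgeSet | w ∈ (e : Sym2 V)}
        (Subtype.val_injective)
      rw [himg] at h2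
      rw [← h2, Set.ncard_eq_toFinset_card']
      have : (H.incidenceSet w).toFinset = H.incidenceFinset w := rfl
      rw [this, SimpleGraph.card_incidenceFinset_eq_degree]
    exact hcard ▸ le_cliqueNumber H.lineGraph hclique
  -- matchings bound the stability number
  have halpha : ∀ M : Set (Sym2 V), H.IsMatchingSet M →
      M.ncard ≤ H.lineGraph.stabilityNumber := by
    intro M hM
    obtain ⟨hst, hcard⟩ := matching_stable hM
    exact hcard ▸ le_stabilityNumber H.lineGraph hst
  by_cases hK2 : ∃ x y : V, H.Adj x y ∧ H.degree x ≤ 1 ∧ H.degree y ≤ 1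
  · -- degenerate case: H = K₂
    obtain ⟨x, y, hxy, hdx, hdy⟩ := hK2
    have hxu : ∀ u, H.Adj x u → u = y := by
      intro u hu
      have h1 : u ∈ H.neighborFinset x := (H.mem_neighborFinset x u).mpr hu
      have h2 : y ∈ H.neighborFinset x := (H.mem_neighborFinset x y).mpr hxy
      exact Finset.card_le_one.mp hdx u h1 y h2
    have hyu : ∀ u, H.Adj y u → u = x := by
      intro u hu
      have h1 : u ∈ H.neighborFinset y := (H.mem_neighborFinset y u).mpr hu
      have h2 : x ∈ H.neighborFinset y := (H.mem_neighborFinset y x).mpr hxy.symm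
      exact Finset.card_le_one.mp hdy u h1 x h2
    have hall : ∀ z : V, z = x ∨ z = y := by
      intro z
      obtain ⟨wk⟩ := (hconn.preconnected x z)
      exact walk_stuck hxu hyu wk.length wk le_rfl
    have hES : H.edgeSet = {s(x, y)} := by
      ext e
      induction e using Sym2.ind with
      | _ a b =>
        simp only [SimpleGraph.mem_edgeSet, Set.mem_singleton_iff]
        constructor
        · intro hab
          rcases hall a with rfl | rfl
          · rcases hall b with rfl | rfl
            · exact absurd rfl hab.ne
            · rfl
          · rcases hall b with rfl | rfl
            · exact Sym2.eq_swap
            · exact absurd rfl hab.ne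
        · intro h
          rw [Sym2.eq_iff] at h
          rcases h with ⟨rfl, rfl⟩ | ⟨rfl, rfl⟩
          · exact hxy
          · exact hxy.symm
    have hone : Nat.card H.edgeSet = 1 := by
      rw [Nat.card_coe_set_eq, hES, Set.ncard_singleton]
    have ha1 : 1 ≤ H.lineGraph.stabilityNumber := by
      have : ({s(x, y)} : Set (Sym2 V)).ncard ≤ H.lineGraph.stabilityNumber := by
        apply halpha
        constructor
        · intro e he
          rw [Set.mem_singleton_iff] at he
          subst he; exact hxy
        · intro e he f hf hef
          rw [Set.mem_singleton_iff] at he hf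
          exact absurd (he.trans hf.symm) hef
      rwa [Set.ncard_singleton] at this
    have hw1 : 1 ≤ H.lineGraph.cliqueNumber := by
      have hcl : H.lineGraph.IsClique {(⟨s(x, y), hxy⟩ : H.edgeSet)} :=
        Set.pairwise_singleton _ _
      have := le_cliqueNumber H.lineGraph hcl
      rwa [Set.ncard_singleton] at this
    rw [hone]
    calc 1 = 1 * 1 := rfl
      _ ≤ H.lineGraph.stabilityNumber * H.lineGraph.cliqueNumber := Nat.mul_le_mul ha1 hw1
  · -- main case
    push_neg at hK2
    have hgood : ∀ x y : V, H.Adj x y → H.degree x ≤ 1 → 2 ≤ H.degree y := by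
      intro x y hxy hx
      have := hK2 x y hxy hx
      omega
    set P : Set V := {v | 2 ≤ H.degree v ∧ ∃ u, H.Adj v u ∧ H.degree u ≤ 1} with hPdef
    set Q : Set V := {v | 2 ≤ H.degree v ∧ ∀ u, H.Adj v u → 2 ≤ H.degree u} with hQdef
    -- leaf choice
    set ℓ : V → V := fun v =>
      if h : ∃ u, H.Adj v u ∧ H.degree u ≤ 1 then h.choose else v with hℓdef
    have hℓ : ∀ v ∈ P, H.Adj v (ℓ v) ∧ H.degree (ℓ v) ≤ 1 := by
      intro v hv
      have h := hv.2
      have hh : ℓ v = h.choose := by rw [hℓdef]; exact dif_pos h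
      rw [hh]
      exact h.choose_spec
    set M0 : Set (Sym2 V) := (fun v => s(v, ℓ v)) '' P with hM0def
    have hM0match : H.IsMatchingSet M0 := by
      constructor
      · rintro e ⟨v, hv, rfl⟩
        exact (hℓ v hv).1
      · rintro e ⟨v, hv, rfl⟩ f ⟨v', hv', rfl⟩ hef z ⟨hz1, hz2⟩
        have hvv' : v ≠ v' := by rintro rfl; exact hef rfl
        rw [Sym2.mem_iff] at hz1 hz2
        have hno1 : v ≠ ℓ v' := by
          intro h
          have h1 := (hℓ v' hv').2
          have h2 := hv.1
          rw [← h] at h1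
          omega
        have hno2 : ℓ v ≠ v' := by
          intro h
          have h1 := (hℓ v hv).2
          have h2 := hv'.1
          rw [h] at h1
          omega
        have hno3 : ℓ v ≠ ℓ v' := by
          intro h
          have h1 : v ∈ H.neighborFinset (ℓ v) :=
            (H.mem_neighborFinset _ _).mpr ((hℓ v hv).1).symm
          have h2 : v' ∈ H.neighborFinset (ℓ v) := by
            rw [h]
            exact (H.mem_neighborFinset _ _).mpr ((hℓ v' hv').1).symm
          have hsub : ({v, v'} : Finset V) ⊆ H.neighborFinset (ℓ v) := by
            intro t ht
            rcases Finset.mem_insert.mp ht with rfl | ht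
            · exact h1
            · rw [Finset.mem_singleton.mp ht]; exact h2
          have hc := Finset.card_le_card hsub
          rw [Finset.card_insert_of_notMem (by simpa using hvv'),
            Finset.card_singleton] at hc
          have hd : H.degree (ℓ v) = (H.neighborFinset (ℓ v)).card := rfl
          have := (hℓ v hv).2
          omega
        rcases hz1 with rfl | rfl <;> rcases hz2 with h | h
        · exact hvv' h
        · exact hno1 h
        · exact hno2 h
        · exact hno3 h
    -- extend M0 to a maximal matching
    obtain ⟨M, ⟨hMmatch, hM0M⟩, hMmax'⟩ :=
      Set.Finite.exists_maximalFor id {M' | H.IsMatchingSet M' ∧ M0 ⊆ M'}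
        (Set.toFinite _) ⟨M0, hM0match, subset_rfl⟩
    have hMmax : Maximal H.IsMatchingSet M := by
      constructor
      · exact hMmatch
      · intro y hy hMy
        have : y ≤ M := hMmax' ⟨hy, hM0M.trans hMy⟩ hMy
        exact this
    -- every vertex of degree ≥ 2 is saturated by M (uses CIS)
    have hRIM : ∀ v : V, 2 ≤ H.degree v → ∃ e ∈ M, v ∈ e := by
      intro v hv
      -- the stable set
      set S : Set H.edgeSet := {e : H.edgeSet | (e : Sym2 V) ∈ M} with hSdef
      have hSstable := (matching_stable hMmatch).1
      have hSmax : Maximal H.lineGraph.IsStableSet S := by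
        constructor
        · exact hSstable
        · intro S' hS' hSS' f hf
          by_contra hfS
          have hfM : (f : Sym2 V) ∉ M := hfS
          have hins : H.IsMatchingSet (insert (f : Sym2 V) M) := by
            constructor
            · intro e he
              rcases Set.mem_insert_iff.mp he with rfl | he
              · exact f.2
              · exact hMmatch.1 he
            · intro e he g hg heg z hz
              rcases Set.mem_insert_iff.mp he with rfl | he <;>
                rcases Set.mem_insert_iff.mp hg with rfl | hg
              · exact heg rfl
              · have hgS : (⟨g, hMmatch.1 hg⟩ : H.edgeSet) ∈ S := hg
                have hne : f ≠ (⟨g, hMmatch.1 hg⟩ : H.edgeSet) := by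
                  intro h
                  rw [h] at hfM
                  exact hfM hg
                have hnadj := hS' hf (hSS' hgS) hne
                exact hnadj (SimpleGraph.lineGraph_adj_iff_exists.mpr
                  ⟨hne, z, hz.1, hz.2⟩)
              · have heS : (⟨e, hMmatch.1 he⟩ : H.edgeSet) ∈ S := he
                have hne : (⟨e, hMmatch.1 he⟩ : H.edgeSet) ≠ f := by
                  intro h
                  rw [← h] at hfM
                  exact hfM he
                have hnadj := hS' (hSS' heS) hf hne
                exact hnadj (SimpleGraph.lineGraph_adj_iff_exists.mpr
                  ⟨hne, z, hz.1, hz.2⟩)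
              · exact hMmatch.2 e he g hg heg z hz
          have := hMmax.2 hins (Set.subset_insert _ _)
          exact hfM (this (Set.mem_insert _ _))
      -- the maximal clique (star at v)
      set C : Set H.edgeSet := {e : H.edgeSet | v ∈ (e : Sym2 V)} with hCdef
      have hCmax : Maximal H.lineGraph.IsClique C := by
        constructor
        · intro e he f hf hef
          rw [SimpleGraph.lineGraph_adj_iff_exists]
          exact ⟨hef, v, he, hf⟩
        · intro C' hC' hsub f hf
          by_contra hvf
          have hlt : 1 < (H.neighborFinset v).card := by
            have hd : H.degree v = (H.neighborFinset v).card := rfl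
            omega
          obtain ⟨a, ha, b, hb, hab⟩ := Finset.one_lt_card.mp hlt
          rw [H.mem_neighborFinset] at ha hb
          have he1 : (⟨s(v, a), ha⟩ : H.edgeSet) ∈ C := Sym2.mem_mk_left v a
          have he2 : (⟨s(v, b), hb⟩ : H.edgeSet) ∈ C := Sym2.mem_mk_left v b
          have haf : a ∈ (f : Sym2 V) := by
            have hne : f ≠ (⟨s(v, a), ha⟩ : H.edgeSet) := by
              intro h
              apply hvf
              rw [h]
              exact Sym2.mem_mk_left v a
            have := hC' hf (hsub he1) hne
            rw [SimpleGraph.lineGraph_adj_iff_exists] at this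
            obtain ⟨-, z, hzf, hz⟩ := this
            rcases Sym2.mem_iff.mp hz with rfl | rfl
            · exact absurd hzf hvf
            · exact hzf
          have hbf : b ∈ (f : Sym2 V) := by
            have hne : f ≠ (⟨s(v, b), hb⟩ : H.edgeSet) := by
              intro h
              apply hvf
              rw [h]
              exact Sym2.mem_mk_left v b
            have := hC' hf (hsub he2) hne
            rw [SimpleGraph.lineGraph_adj_iff_exists] at this
            obtain ⟨-, z, hzf, hz⟩ := this
            rcases Sym2.mem_iff.mp hz with rfl | rfl
            · exact absurd hzf hvf
            · exact hzf
          have hfab : (f : Sym2 V) = s(a, b) := (Sym2.mem_and_mem_iff hab).mp ⟨haf, hbf⟩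
          have hAdjab : H.Adj a b := H.mem_edgeSet.mp (hfab ▸ f.2)
          exact htri {v, a, b} (SimpleGraph.is3Clique_triple_iff.mpr ⟨ha, hb, hAdjab⟩)
      obtain ⟨e, heC, heS⟩ := hcis C S hCmax hSmax
      exact ⟨e, heS, heC⟩
    -- Finset versions
    set Pf : Finset V := Finset.univ.filter (· ∈ P) with hPfdef
    set Qf : Finset V := Finset.univ.filter (· ∈ Q) with hQfdef
    set Mf : Finset (Sym2 V) := (Set.toFinite M).toFinset with hMfdef
    have hMfmem : ∀ e, e ∈ Mf ↔ e ∈ M := fun e => Set.Finite.mem_toFinset _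
    set M1f : Finset (Sym2 V) := Mf.filter (fun e => ∀ v ∈ e, v ∈ Q) with hM1fdef
    set M0f : Finset (Sym2 V) := Pf.image (fun v => s(v, ℓ v)) with hM0fdef
    have hM0fsub : M0f ⊆ Mf := by
      intro e he
      obtain ⟨v, hv, rfl⟩ := Finset.mem_image.mp he
      rw [hMfmem]
      exact hM0M ⟨v, (Finset.mem_filter.mp hv).2, rfl⟩
    have hM0fcard : M0f.card = Pf.card := by
      apply Finset.card_image_of_injOn
      intro v hv v' hv' h
      have hvP := (Finset.mem_filter.mp hv).2
      have hv'P := (Finset.mem_filter.mp hv').2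
      rw [Sym2.eq_iff] at h
      rcases h with ⟨rfl, -⟩ | ⟨h1, h2⟩
      · rfl
      · exfalso
        have := (hℓ v' hv'P).2
        have := hvP.1
        rw [← h1] at *
        omega
    have hdisj : Disjoint M0f M1f := by
      rw [Finset.disjoint_left]
      intro e he he1
      obtain ⟨v, hv, rfl⟩ := Finset.mem_image.mp he
      have hvP := (Finset.mem_filter.mp hv).2
      have hQall := (Finset.mem_filter.mp he1).2
      have : ℓ v ∈ Q := hQall (ℓ v) (Sym2.mem_mk_right v (ℓ v))
      have h1 := this.1
      have h2 := (hℓ v hvP).2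
      omega
    have hsumcard : Pf.card + M1f.card ≤ Mf.card := by
      have hsub : M0f ∪ M1f ⊆ Mf :=
        Finset.union_subset hM0fsub (Finset.filter_subset _ _)
      calc Pf.card + M1f.card = M0f.card + M1f.card := by rw [hM0fcard]
        _ = (M0f ∪ M1f).card := (Finset.card_union_of_disjoint hdisj).symm
        _ ≤ Mf.card := Finset.card_le_card hsub
    -- every Q-vertex is saturated by an M1f edge
    have hQsat : ∀ q ∈ Q, ∃ e ∈ M1f, q ∈ e := by
      intro q hq
      obtain ⟨e, heM, hqe⟩ := hRIM q hq.1
      obtain ⟨r, rfl⟩ := Sym2.mem_iff_exists.mp hqe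
      have hAdjqr : H.Adj q r := H.mem_edgeSet.mp (hMmatch.1 heM)
      have hdr : 2 ≤ H.degree r := hq.2 r hAdjqr
      have hrQ : r ∈ Q := by
        refine ⟨hdr, ?_⟩
        intro u hu
        by_contra hdu
        have hrP : r ∈ P := ⟨hdr, u, hu, by omega⟩
        have hfM : s(r, ℓ r) ∈ M := hM0M ⟨r, hrP, rfl⟩
        have hqr : q ≠ r := hAdjqr.ne
        have hqℓ : q ≠ ℓ r := by
          intro h
          have := (hℓ r hrP).2
          have := hq.1
          rw [← h] at *
          omega
        have hne : s(q, r) ≠ s(r, ℓ r) := by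
          intro h
          have : q ∈ s(r, ℓ r) := h ▸ Sym2.mem_mk_left q r
          rcases Sym2.mem_iff.mp this with h' | h'
          · exact hqr h'
          · exact hqℓ h'
        exact hMmatch.2 _ heM _ hfM hne r
          ⟨Sym2.mem_mk_right q r, Sym2.mem_mk_left r (ℓ r)⟩
      refine ⟨s(q, r), ?_, Sym2.mem_mk_left q r⟩
      rw [hM1fdef, Finset.mem_filter]
      refine ⟨(hMfmem _).mpr heM, ?_⟩
      intro z hz
      rcases Sym2.mem_iff.mp hz with rfl | rfl
      · exact hq
      · exact hrQ
    -- |Qf| ≤ 2 |M1f|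
    have hQcard : Qf.card ≤ 2 * M1f.card := by
      set g : V → Sym2 V := fun q =>
        if h : ∃ e ∈ M1f, q ∈ e then h.choose else s(q, q) with hgdef
      have hg : ∀ q ∈ Qf, g q ∈ M1f ∧ q ∈ g q := by
        intro q hq
        have hqQ := (Finset.mem_filter.mp hq).2
        have h := hQsat q hqQ
        simp only [hgdef, dif_pos h]
        obtain ⟨h1, h2⟩ := h.choose_spec
        exact ⟨h1, h2⟩
      have himgsub : Qf.image g ⊆ M1f := by
        intro e he
        obtain ⟨q, hq, rfl⟩ := Finset.mem_image.mp he
        exact (hg q hq).1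
      calc Qf.card ≤ 2 * (Qf.image g).card := by
            apply Finset.card_le_mul_card_image
            intro e he
            obtain ⟨q0, hq0, rfl⟩ := Finset.mem_image.mp he
            induction (g q0) using Sym2.ind with
            | _ u1 u2 =>
              have hsub : {a ∈ Qf | g a = s(u1, u2)} ⊆ {u1, u2} := by
                intro q hq
                obtain ⟨hqQf, hgq⟩ := Finset.mem_filter.mp hq
                have := (hg q hqQf).2
                rw [hgq] at this
                rcases Sym2.mem_iff.mp this with rfl | rfl
                · exact Finset.mem_insert_self _ _
                · exact Finset.mem_insert_of_mem (Finset.mem_singleton_self _)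
              calc {a ∈ Qf | g a = s(u1, u2)}.card ≤ ({u1, u2} : Finset V).card :=
                    Finset.card_le_card hsub
                _ ≤ 2 := Finset.card_insert_le _ _ |>.trans (by simp)
        _ ≤ 2 * M1f.card := Nat.mul_le_mul_left 2 (Finset.card_le_card himgsub)
    -- the Q-induced subgraph
    set HQ : SimpleGraph V :=
      SimpleGraph.fromRel (fun a b => H.Adj a b ∧ a ∈ Q ∧ b ∈ Q) with hHQdef
    have hHQadj : ∀ a b : V, HQ.Adj a b ↔ H.Adj a b ∧ a ∈ Q ∧ b ∈ Q := by
      intro a b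
      rw [hHQdef, SimpleGraph.fromRel_adj]
      constructor
      · rintro ⟨hne, h | h⟩
        · exact h
        · exact ⟨h.1.symm, h.2.2, h.2.1⟩
      · intro h
        exact ⟨h.1.ne, Or.inl h⟩
    haveI : DecidableRel HQ.Adj := Classical.decRel _
    set EQf : Finset (Sym2 V) := H.edgeFinset.filter (fun e => ∀ v ∈ e, v ∈ Q) with hEQfdef
    have hEQ : HQ.edgeFinset = EQf := by
      ext e
      induction e using Sym2.ind with
      | _ a b =>
        rw [SimpleGraph.mem_edgeFinset, SimpleGraph.mem_edgeSet, hHQadj,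
          hEQfdef, Finset.mem_filter, SimpleGraph.mem_edgeFinset, SimpleGraph.mem_edgeSet]
        constructor
        · rintro ⟨h1, h2, h3⟩
          refine ⟨h1, ?_⟩
          intro z hz
          rcases Sym2.mem_iff.mp hz with rfl | rfl
          · exact h2
          · exact h3
        · rintro ⟨h1, h2⟩
          exact ⟨h1, h2 a (Sym2.mem_mk_left a b), h2 b (Sym2.mem_mk_right a b)⟩
    have hHQdegle : ∀ v : V, HQ.degree v ≤ H.degree v := by
      intro v
      apply Finset.card_le_card
      intro u hu
      rw [SimpleGraph.mem_neighborFinset] at hu ⊢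
      exact ((hHQadj v u).mp hu).1
    have hHQdeg0 : ∀ v : V, v ∉ Q → HQ.degree v = 0 := by
      intro v hv
      rw [SimpleGraph.degree, Finset.card_eq_zero]
      ext u
      simp only [SimpleGraph.mem_neighborFinset, Finset.notMem_empty, iff_false]
      intro hu
      exact hv ((hHQadj v u).mp hu).2.1
    have hEQbound : EQf.card ≤ M1f.card * Δ := by
      have h2 : 2 * EQf.card = ∑ v : V, HQ.degree v := by
        rw [← hEQ, ← SimpleGraph.sum_degrees_eq_twice_card_edges]
      have h3 : ∑ v : V, HQ.degree v = ∑ v ∈ Qf, HQ.degree v := by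
        symm
        apply Finset.sum_subset (Finset.subset_univ Qf)
        intro v _ hv
        apply hHQdeg0
        intro hvQ
        exact hv (Finset.mem_filter.mpr ⟨Finset.mem_univ v, hvQ⟩)
      have h4 : ∑ v ∈ Qf, HQ.degree v ≤ Qf.card * Δ := by
        calc ∑ v ∈ Qf, HQ.degree v ≤ ∑ v ∈ Qf, Δ :=
              Finset.sum_le_sum (fun v _ => (hHQdegle v).trans (hΔ v))
          _ = Qf.card * Δ := by rw [Finset.sum_const, smul_eq_mul]
      have : 2 * EQf.card ≤ 2 * (M1f.card * Δ) := by
        rw [h2, h3]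
        calc ∑ v ∈ Qf, HQ.degree v ≤ Qf.card * Δ := h4
          _ ≤ 2 * M1f.card * Δ := Nat.mul_le_mul_right Δ hQcard
          _ = 2 * (M1f.card * Δ) := by ring
      omega
    -- edges meeting P
    set EPf : Finset (Sym2 V) := H.edgeFinset.filter (fun e => ∃ v ∈ e, v ∈ P) with hEPfdef
    have hEPbound : EPf.card ≤ Pf.card * Δ := by
      have hsub : EPf ⊆ Pf.biUnion (fun v => H.incidenceFinset v) := by
        intro e he
        obtain ⟨heE, v, hve, hvP⟩ := Finset.mem_filter.mp he
        apply Finset.mem_biUnion.mpr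
        refine ⟨v, Finset.mem_filter.mpr ⟨Finset.mem_univ v, hvP⟩, ?_⟩
        rw [SimpleGraph.mem_incidenceFinset]
        exact ⟨SimpleGraph.mem_edgeFinset.mp heE, hve⟩
      calc EPf.card ≤ (Pf.biUnion (fun v => H.incidenceFinset v)).card :=
            Finset.card_le_card hsub
        _ ≤ ∑ v ∈ Pf, (H.incidenceFinset v).card := Finset.card_biUnion_le
        _ = ∑ v ∈ Pf, H.degree v := by
            apply Finset.sum_congr rfl
            intro v _
            exact SimpleGraph.card_incidenceFinset_eq_degree H v
        _ ≤ ∑ v ∈ Pf, Δ := Finset.sum_le_sum (fun v _ => hΔ v)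
        _ = Pf.card * Δ := by rw [Finset.sum_const, smul_eq_mul]
    -- cover
    have hcover : H.edgeFinset ⊆ EPf ∪ EQf := by
      intro e he
      induction e using Sym2.ind with
      | _ a b =>
        have hab : H.Adj a b := (H.mem_edgeSet).mp (SimpleGraph.mem_edgeFinset.mp he)
        by_cases hp : a ∈ P ∨ b ∈ P
        · apply Finset.mem_union_left
          rw [hEPfdef, Finset.mem_filter]
          refine ⟨he, ?_⟩
          rcases hp with hp | hp
          · exact ⟨a, Sym2.mem_mk_left a b, hp⟩
          · exact ⟨b, Sym2.mem_mk_right a b, hp⟩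
        · push_neg at hp
          obtain ⟨haP, hbP⟩ := hp
          have hda : 2 ≤ H.degree a := by
            by_contra h
            have hdb := hgood a b hab (by omega)
            exact hbP ⟨hdb, a, hab.symm, by omega⟩
          have hdb : 2 ≤ H.degree b := by
            by_contra h
            have hda' := hgood b a hab.symm (by omega)
            exact haP ⟨hda', b, hab, by omega⟩
          have haQ : a ∈ Q := by
            refine ⟨hda, ?_⟩
            intro u hu
            by_contra h
            exact haP ⟨hda, u, hu, by omega⟩
          have hbQ : b ∈ Q := by
            refine ⟨hdb, ?_⟩
            intro u hu
            by_contra h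
            exact hbP ⟨hdb, u, hu, by omega⟩
          apply Finset.mem_union_right
          rw [hEQfdef, Finset.mem_filter]
          refine ⟨he, ?_⟩
          intro z hz
          rcases Sym2.mem_iff.mp hz with rfl | rfl
          · exact haQ
          · exact hbQ
    -- final chain
    have hMcard : Mf.card = M.ncard := (Set.ncard_eq_toFinset_card M (Set.toFinite M)).symm
    have halphaM : Mf.card ≤ H.lineGraph.stabilityNumber := by
      rw [hMcard]
      exact halpha M hMmatch
    calc Nat.card H.edgeSet = H.edgeFinset.card := hEcard
      _ ≤ (EPf ∪ EQf).card := Finset.card_le_card hcover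
      _ ≤ EPf.card + EQf.card := Finset.card_union_le _ _
      _ ≤ Pf.card * Δ + M1f.card * Δ := Nat.add_le_add hEPbound hEQbound
      _ = (Pf.card + M1f.card) * Δ := (Nat.add_mul _ _ _).symm
      _ ≤ Mf.card * Δ := Nat.mul_le_mul_right Δ hsumcard
      _ ≤ H.lineGraph.stabilityNumber * H.lineGraph.cliqueNumber :=
          Nat.mul_le_mul halphaM homega
end

section
/- If G is a finite claw-free CIS graph, then |V(G)| ≤ α(G) · ω(G), where α(G) is the stability number and ω(G) is the clique number of G. -/
open SimpleGraph

section StmtAux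
variable {V : Type*}

lemma exists_maximal_superset_s14 [Finite V] (P : Set V → Prop) {W : Set V} (hW : P W) :
    ∃ M, W ⊆ M ∧ Maximal P M := by
  obtain ⟨M, hM, hmax⟩ := Set.Finite.exists_maximalFor (id : Set V → Set V)
    {T | P T ∧ W ⊆ T} (Set.toFinite _) ⟨W, hW, subset_rfl⟩
  refine ⟨M, hM.2, hM.1, fun T hT hMT => ?_⟩
  have h2 := hmax (j := T) ⟨hT, hM.2.trans hMT⟩ hMT
  simp only [id] at h2
  exact h2

lemma stable_ncard_le [Fintype V] (G : SimpleGraph V) {T : Set V} (hT : G.IsStableSet T) :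
    T.ncard ≤ G.stabilityNumber := by
  have hbdd : BddAbove {n | ∃ S : Set V, G.IsStableSet S ∧ S.ncard = n} := by
    refine ⟨Fintype.card V, ?_⟩
    rintro n ⟨T', _, rfl⟩
    simpa [Set.ncard_univ] using Set.ncard_le_ncard (Set.subset_univ T') Set.finite_univ
  exact le_csSup hbdd ⟨T, hT, rfl⟩

lemma clique_ncard_le [Fintype V] (G : SimpleGraph V) {C : Set V} (hC : G.IsClique C) :
    C.ncard ≤ G.cliqueNumber := by
  have hbdd : BddAbove {n | ∃ C : Set V, G.IsClique C ∧ C.ncard = n} := by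
    refine ⟨Fintype.card V, ?_⟩
    rintro n ⟨C', _, rfl⟩
    simpa [Set.ncard_univ] using Set.ncard_le_ncard (Set.subset_univ C') Set.finite_univ
  exact le_csSup hbdd ⟨C, hC, rfl⟩

lemma exists_max_stable_s14 [Fintype V] (G : SimpleGraph V) :
    ∃ S : Set V, G.IsStableSet S ∧ S.ncard = G.stabilityNumber := by
  have hne : (0 : ℕ) ∈ {n | ∃ S : Set V, G.IsStableSet S ∧ S.ncard = n} :=
    ⟨∅, by simp [SimpleGraph.IsStableSet], by simp⟩
  have hbdd : BddAbove {n | ∃ S : Set V, G.IsStableSet S ∧ S.ncard = n} := by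
    refine ⟨Fintype.card V, ?_⟩
    rintro n ⟨T', _, rfl⟩
    simpa [Set.ncard_univ] using Set.ncard_le_ncard (Set.subset_univ T') Set.finite_univ
  exact Nat.sSup_mem ⟨0, hne⟩ hbdd

/-- Lemma 1: a vertex `v` outside a maximum stable set `S` whose unique `S`-neighbour is `s`
is adjacent to every other neighbour of `s`. -/
lemma private_adj [Fintype V] {G : SimpleGraph V} (hcis : G.IsCIS) {S : Set V}
    (hSst : G.IsStableSet S) (hSc : ∀ T, G.IsStableSet T → T.ncard ≤ S.ncard)
    {v s : V} (hvS : v ∉ S) (hs : s ∈ S) (hsv : G.Adj s v)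
    (huniq : ∀ s' ∈ S, G.Adj s' v → s' = s)
    {u : V} (hu : G.Adj s u) (huv : u ≠ v) : G.Adj u v := by
  by_contra hnadj
  set U : Set V := insert v (S \ {s}) with hU
  have hUst : G.IsStableSet U := by
    intro x hx y hy hxy
    rcases hx with rfl | hx <;> rcases hy with rfl | hy
    · exact absurd rfl hxy
    · exact fun h => hy.2 (huniq y hy.1 h.symm)
    · exact fun h => hx.2 (huniq x hx.1 h)
    · exact hSst hx.1 hy.1 hxy
  have hvS' : v ∉ S \ {s} := fun h => hvS h.1
  have hS1 : 1 ≤ S.ncard := (Set.ncard_pos (Set.toFinite _)).2 ⟨s, hs⟩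
  have hcard : U.ncard = S.ncard := by
    rw [hU, Set.ncard_insert_of_notMem hvS' (Set.toFinite _),
        Set.ncard_diff_singleton_of_mem hs]
    omega
  have hUmax : Maximal G.IsStableSet U := by
    refine ⟨hUst, fun T hT hUT => ?_⟩
    exact (Set.eq_of_subset_of_ncard_le hUT (by rw [hcard]; exact hSc T hT) (Set.toFinite _)).ge
  have hclq : G.IsClique {s, u} := by
    intro x hx y hy hxy
    rcases hx with rfl | rfl <;> rcases hy with rfl | rfl <;> simp_all [hu.symm]
  obtain ⟨F, hWF, hFmax⟩ := exists_maximal_superset_s14 G.IsClique hclq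
  obtain ⟨x, hxF, hxU⟩ := hcis F U hFmax hUmax
  have hsF : s ∈ F := hWF (by simp)
  have huF : u ∈ F := hWF (by simp)
  rcases hxU with rfl | hxU
  · exact hnadj (hFmax.1 huF hxF huv)
  · have hxs : x ≠ s := fun h => hxU.2 (by simp [h])
    exact hSst hs hxU.1 (Ne.symm hxs) (hFmax.1 hsF hxF (Ne.symm hxs))
lemma clawFree_local {G : SimpleGraph V} (hclaw : G.InducedFree clawGraph)
    {s a b c : V} (hab : a ≠ b) (hac : a ≠ c) (hbc : b ≠ c)
    (hsa : G.Adj s a) (hsb : G.Adj s b) (hsc : G.Adj s c)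
    (hnab : ¬ G.Adj a b) (hnac : ¬ G.Adj a c) (hnbc : ¬ G.Adj b c) : False := by
  have hnba : ¬ G.Adj b a := fun h => hnab h.symm
  have hnca : ¬ G.Adj c a := fun h => hnac h.symm
  have hncb : ¬ G.Adj c b := fun h => hnbc h.symm
  have hsa' : s ≠ a := G.ne_of_adj hsa
  have hsb' : s ≠ b := G.ne_of_adj hsb
  have hsc' : s ≠ c := G.ne_of_adj hsc
  apply hclaw {s, a, b, c}
  refine ⟨⟨Equiv.ofBijective (fun x => Sum.elim (fun _ => (⟨s, by simp⟩ : ({s,a,b,c} : Set V)))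
      (fun i => ![(⟨a, by simp⟩ : ({s,a,b,c} : Set V)), ⟨b, by simp⟩, ⟨c, by simp⟩] i) x) ⟨?_, ?_⟩, ?_⟩⟩
  · -- injective
    rintro (⟨i⟩ | i) (⟨j⟩ | j) h <;>
      simp only [Sum.elim_inl, Sum.elim_inr, Subtype.mk.injEq] at h
    · exact congrArg Sum.inl (Subsingleton.elim i j)
    · fin_cases j <;> simp_all
    · fin_cases i <;> simp_all
    · fin_cases i <;> fin_cases j <;> simp_all
  · -- surjective
    rintro ⟨x, hx⟩
    rcases hx with rfl | rfl | rfl | rfl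
    · exact ⟨Sum.inl 0, rfl⟩
    · exact ⟨Sum.inr 0, rfl⟩
    · exact ⟨Sum.inr 1, rfl⟩
    · exact ⟨Sum.inr 2, rfl⟩
  · -- map_rel_iff
    rintro (⟨i⟩ | i) (⟨j⟩ | j) <;>
      [skip; fin_cases j; fin_cases i; (fin_cases i <;> fin_cases j)] <;>
      simp [clawGraph, Equiv.ofBijective, comap_adj, hsa, hsb, hsc, hsa.symm, hsb.symm, hsc.symm,
        hnab, hnac, hnbc, hnba, hnca, hncb, G.irrefl]


def nonIso {V : Type*} (G : SimpleGraph V) (s : V) : Set V :=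
  {v | v ∈ G.neighborSet s ∧ ∃ u ∈ G.neighborSet s, u ≠ v ∧ ¬ G.Adj u v}

/-- Master lemma: for any maximal clique F containing s ∈ S, the set N(s) \ F is a clique. -/
lemma master_lemma [Fintype V] {G : SimpleGraph V} (hclaw : G.InducedFree clawGraph)
    (hcis : G.IsCIS) {S : Set V} (hSst : G.IsStableSet S) {s : V} (hs : s ∈ S)
    {F : Set V} (hFmax : Maximal G.IsClique F) (hsF : s ∈ F) :
    G.IsClique (G.neighborSet s \ F) := by
  intro a ha b hb hab
  by_contra hnadj
  set W : Set V := insert a (insert b (S \ (G.neighborSet a ∪ G.neighborSet b))) with hW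
  have haW : a ∈ W := Set.mem_insert _ _
  have hbW : b ∈ W := Set.mem_insert_of_mem _ (Set.mem_insert _ _)
  have hWst : G.IsStableSet W := by
    intro x hx y hy hxy
    have key : ∀ z ∈ S \ (G.neighborSet a ∪ G.neighborSet b), ¬ G.Adj a z ∧ ¬ G.Adj b z := by
      rintro z ⟨_, hz2⟩
      constructor
      · exact fun h => hz2 (Or.inl h)
      · exact fun h => hz2 (Or.inr h)
    rcases hx with rfl | rfl | hx <;> rcases hy with rfl | rfl | hy
    · exact absurd rfl hxy
    · exact hnadj
    · exact (key y hy).1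
    · exact fun h => hnadj h.symm
    · exact absurd rfl hxy
    · exact (key y hy).2
    · exact fun h => (key x hx).1 h.symm
    · exact fun h => (key x hx).2 h.symm
    · exact hSst hx.1 hy.1 hxy
  obtain ⟨U, hWU, hUmax⟩ := exists_maximal_superset_s14 G.IsStableSet hWst
  have haU : a ∈ U := hWU haW
  have hbU : b ∈ U := hWU hbW
  obtain ⟨x, hxF, hxU⟩ := hcis F U hFmax hUmax
  have hsa : G.Adj s a := ha.1
  have hsb : G.Adj s b := hb.1
  by_cases hxs : x = s
  · subst hxs
    exact hUmax.1 hxU haU (G.ne_of_adj hsa) hsa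
  · have hxN : G.Adj s x := hFmax.1 hsF hxF (Ne.symm hxs)
    have hxa : x ≠ a := fun h => ha.2 (h ▸ hxF)
    have hxb : x ≠ b := fun h => hb.2 (h ▸ hxF)
    exact clawFree_local hclaw hxa hxb hab hxN hsa hsb
      (hUmax.1 hxU haU hxa) (hUmax.1 hxU hbU hxb) hnadj

/-- A vertex of N(s) adjacent to all other vertices of N(s) lies in every maximal clique
containing s. -/
lemma iso_mem_max_clique {G : SimpleGraph V} {F : Set V} (hF : Maximal G.IsClique F)
    {s w : V} (hsF : s ∈ F) (hw : w ∈ G.neighborSet s)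
    (hiso : ∀ u ∈ G.neighborSet s, u ≠ w → G.Adj w u) : w ∈ F := by
  have hclq : G.IsClique (insert w F) := by
    intro x hx y hy hxy
    have main : ∀ y ∈ F, w ≠ y → G.Adj w y := by
      intro y hy hwy
      by_cases hys : y = s
      · subst hys; exact hw.symm
      · exact hiso y (hF.1 hsF hy (Ne.symm hys)) (Ne.symm hwy)
    rcases hx with rfl | hx <;> rcases hy with rfl | hy
    · exact absurd rfl hxy
    · exact main y hy hxy
    · exact (main x hx (Ne.symm hxy)).symm
    · exact hF.1 hx hy hxy
  exact hF.2 hclq (Set.subset_insert _ _) (Set.mem_insert _ _)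

/-- Per-vertex inequality: 2|N(s)| + 2 ≤ 2ω + |NI(s)|. -/
lemma per_s [Fintype V] {G : SimpleGraph V} (hclaw : G.InducedFree clawGraph)
    (hcis : G.IsCIS) {S : Set V} (hSst : G.IsStableSet S) {s : V} (hs : s ∈ S) :
    2 * (G.neighborSet s).ncard + 2 ≤ 2 * G.cliqueNumber + (nonIso G s).ncard := by
  classical
  have hsingle : G.IsClique {s} := by simp
  obtain ⟨F₁, hsF₁', hF₁⟩ := exists_maximal_superset_s14 G.IsClique hsingle
  have hsF₁ : s ∈ F₁ := hsF₁' rfl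
  set E := nonIso G s with hE
  have hEN : E ⊆ G.neighborSet s := fun x hx => hx.1
  have hBclq : G.IsClique (insert s (E \ F₁)) := by
    intro x hx y hy hxy
    have hmaster := master_lemma hclaw hcis hSst hs hF₁ hsF₁
    have main : ∀ y ∈ E \ F₁, s ≠ y → G.Adj s y := fun y hy _ => (hEN hy.1)
    rcases hx with rfl | hx <;> rcases hy with rfl | hy
    · exact absurd rfl hxy
    · exact main y hy hxy
    · exact (main x hx (Ne.symm hxy)).symm
    · exact hmaster ⟨hEN hx.1, hx.2⟩ ⟨hEN hy.1, hy.2⟩ hxy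
  obtain ⟨F₂, hBF₂, hF₂⟩ := exists_maximal_superset_s14 G.IsClique hBclq
  have hsF₂ : s ∈ F₂ := hBF₂ (Set.mem_insert _ _)
  have hEsplit : (E \ F₁).ncard + (E \ F₂).ncard ≤ E.ncard := by
    have hsub : E \ F₂ ⊆ E ∩ F₁ := by
      rintro x ⟨hx1, hx2⟩
      refine ⟨hx1, by_contra fun h => hx2 (hBF₂ (Set.mem_insert_of_mem _ ⟨hx1, h⟩))⟩
    calc (E \ F₁).ncard + (E \ F₂).ncard
        ≤ (E \ F₁).ncard + (E ∩ F₁).ncard :=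
          Nat.add_le_add_left (Set.ncard_le_ncard hsub (Set.toFinite _)) _
      _ = E.ncard := by
          rw [add_comm, Set.ncard_inter_add_ncard_diff_eq_ncard E F₁ (Set.toFinite _)]
  obtain ⟨F, hFmax, hsF, hEF⟩ :
      ∃ F, Maximal G.IsClique F ∧ s ∈ F ∧ 2 * (E \ F).ncard ≤ E.ncard := by
    rcases le_or_gt (2 * (E \ F₁).ncard) E.ncard with h | h
    · exact ⟨F₁, hF₁, hsF₁, h⟩
    · exact ⟨F₂, hF₂, hsF₂, by omega⟩
  have hcover : G.neighborSet s ⊆ (G.neighborSet s ∩ F) ∪ (E \ F) := by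
    intro x hx
    by_cases hxF : x ∈ F
    · exact Or.inl ⟨hx, hxF⟩
    · refine Or.inr ⟨?_, hxF⟩
      by_contra hxE
      apply hxF
      refine iso_mem_max_clique hFmax hsF hx ?_
      intro u hu hux
      by_contra hadj
      exact hxE ⟨hx, u, hu, hux, fun h => hadj h.symm⟩
  have h1 : (G.neighborSet s).ncard ≤ (G.neighborSet s ∩ F).ncard + (E \ F).ncard := by
    refine le_trans (Set.ncard_le_ncard hcover (Set.toFinite _)) (Set.ncard_union_le _ _)
  have h2 : (G.neighborSet s ∩ F).ncard + 1 ≤ G.cliqueNumber := by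
    have hsN : s ∉ G.neighborSet s ∩ F := fun h => G.irrefl h.1
    have hsub : insert s (G.neighborSet s ∩ F) ⊆ F :=
      Set.insert_subset hsF Set.inter_subset_right
    have := clique_ncard_le G (hFmax.1.subset hsub)
    rwa [Set.ncard_insert_of_notMem hsN (Set.toFinite _)] at this
  omega

end StmtAux


/-- If `G` is a finite claw-free CIS graph, then `|V(G)| ≤ α(G) · ω(G)`. -/
theorem stmt_14 {V : Type*} [Fintype V] (G : SimpleGraph V)
    (hclaw : G.InducedFree clawGraph) (hcis : G.IsCIS) :
    Fintype.card V ≤ G.stabilityNumber * G.cliqueNumber := by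
  classical
  obtain ⟨S, hSst, hScard⟩ := exists_max_stable_s14 G
  have hSc : ∀ T, G.IsStableSet T → T.ncard ≤ S.ncard := fun T hT => by
    rw [hScard]; exact stable_ncard_le G hT
  set SF : Finset V := S.toFinite.toFinset with hSF
  set CF : Finset V := (Sᶜ : Set V).toFinite.toFinset with hCF
  have hmemSF : ∀ x, x ∈ SF ↔ x ∈ S := fun x => Set.Finite.mem_toFinset _
  have hmemCF : ∀ x, x ∈ CF ↔ x ∉ S := fun x => by
    rw [hCF, Set.Finite.mem_toFinset]; exact Iff.rfl
  have hSFcard : SF.card = G.stabilityNumber := by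
    rw [hSF, ← Set.ncard_eq_toFinset_card, hScard]
  have hcards : SF.card + CF.card = Fintype.card V := by
    have hcompl : CF = SFᶜ := by
      ext x; simp [hmemSF x, hmemCF x]
    rw [hcompl, Finset.card_add_card_compl]
  -- per-s inequality in Finset terms
  have hpers : ∀ s ∈ SF,
      2 * (CF.filter (fun v => G.Adj s v)).card + 2 ≤
        2 * G.cliqueNumber + (CF.filter (fun v => v ∈ nonIso G s)).card := by
    intro s hsSF
    have hs : s ∈ S := (hmemSF s).1 hsSF
    have hnbr : ∀ v, G.Adj s v → v ∉ S := by
      intro v hadj hv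
      exact hSst hs hv (G.ne_of_adj hadj) hadj
    have e1 : (CF.filter (fun v => G.Adj s v)).card = (G.neighborSet s).ncard := by
      have hset : CF.filter (fun v => G.Adj s v) = (G.neighborSet s).toFinite.toFinset := by
        ext v
        simp only [Finset.mem_filter, Set.Finite.mem_toFinset, SimpleGraph.mem_neighborSet,
          hmemCF v]
        exact ⟨fun h => h.2, fun h => ⟨hnbr v h, h⟩⟩
      rw [hset]
      exact (Set.ncard_eq_toFinset_card _ _).symm
    have e2 : (CF.filter (fun v => v ∈ nonIso G s)).card = (nonIso G s).ncard := by
      have hset : CF.filter (fun v => v ∈ nonIso G s) = (nonIso G s).toFinite.toFinset := by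
        ext v
        simp only [Finset.mem_filter, Set.Finite.mem_toFinset, hmemCF v]
        exact ⟨fun h => h.2, fun h => ⟨hnbr v h.1, h⟩⟩
      rw [hset]
      exact (Set.ncard_eq_toFinset_card _ _).symm
    rw [e1, e2]
    exact per_s hclaw hcis hSst hs
  -- per-v inequality
  have hperv : ∀ v ∈ CF,
      (SF.filter (fun s => v ∈ nonIso G s)).card + 2 ≤
        2 * (SF.filter (fun s => G.Adj s v)).card := by
    intro v hvCF
    have hv : v ∉ S := (hmemCF v).1 hvCF
    have hni_le : (SF.filter (fun s => v ∈ nonIso G s)).card ≤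
        (SF.filter (fun s => G.Adj s v)).card := by
      apply Finset.card_le_card
      intro s hsf
      rw [Finset.mem_filter] at hsf ⊢
      exact ⟨hsf.1, hsf.2.1⟩
    have hk1 : 1 ≤ (SF.filter (fun s => G.Adj s v)).card := by
      by_contra h
      have hempty : SF.filter (fun s => G.Adj s v) = ∅ := by
        rw [← Finset.card_eq_zero]; omega
      have hnone : ∀ s ∈ S, ¬ G.Adj s v := by
        intro s hs hadj
        have hmem : s ∈ SF.filter (fun s => G.Adj s v) :=
          Finset.mem_filter.2 ⟨(hmemSF s).2 hs, hadj⟩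
        simp [hempty] at hmem
      have hstab : G.IsStableSet (insert v S) := by
        intro x hx y hy hxy
        rcases hx with rfl | hx <;> rcases hy with rfl | hy
        · exact absurd rfl hxy
        · exact fun h => hnone y hy h.symm
        · exact fun h => hnone x hx h
        · exact hSst hx hy hxy
      have hle := hSc _ hstab
      rw [Set.ncard_insert_of_notMem hv (Set.toFinite _)] at hle
      omega
    have hk2 : (SF.filter (fun s => G.Adj s v)).card ≤ 2 := by
      by_contra h
      push_neg at h
      have h3 : 3 ≤ (SF.filter (fun s => G.Adj s v)).card := h
      set f := SF.filter (fun s => G.Adj s v) with hf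
      have hf1 : f.Nonempty := Finset.card_pos.1 (by omega)
      obtain ⟨s₁, hs₁⟩ := hf1
      have hf2 : ((f.erase s₁)).Nonempty := by
        apply Finset.card_pos.1
        rw [Finset.card_erase_of_mem hs₁]; omega
      obtain ⟨s₂, hs₂⟩ := hf2
      have hs₂f : s₂ ∈ f := Finset.mem_of_mem_erase hs₂
      have hs₂₁ : s₂ ≠ s₁ := Finset.ne_of_mem_erase hs₂
      have hf3 : (((f.erase s₁).erase s₂)).Nonempty := by
        apply Finset.card_pos.1
        rw [Finset.card_erase_of_mem hs₂, Finset.card_erase_of_mem hs₁]; omega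
      obtain ⟨s₃, hs₃⟩ := hf3
      have hs₃f : s₃ ∈ f := Finset.mem_of_mem_erase (Finset.mem_of_mem_erase hs₃)
      have hs₃₂ : s₃ ≠ s₂ := Finset.ne_of_mem_erase hs₃
      have hs₃₁ : s₃ ≠ s₁ := Finset.ne_of_mem_erase (Finset.mem_of_mem_erase hs₃)
      have hmem : ∀ s, s ∈ f → s ∈ S ∧ G.Adj v s := by
        intro s hsf
        rw [hf, Finset.mem_filter] at hsf
        exact ⟨(hmemSF s).1 hsf.1, hsf.2.symm⟩
      obtain ⟨hS₁, hA₁⟩ := hmem s₁ hs₁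
      obtain ⟨hS₂, hA₂⟩ := hmem s₂ hs₂f
      obtain ⟨hS₃, hA₃⟩ := hmem s₃ hs₃f
      exact clawFree_local hclaw hs₂₁.symm hs₃₁.symm hs₃₂.symm hA₁ hA₂ hA₃
        (hSst hS₁ hS₂ hs₂₁.symm) (hSst hS₁ hS₃ hs₃₁.symm) (hSst hS₂ hS₃ hs₃₂.symm)
    rcases Nat.lt_or_ge (SF.filter (fun s => G.Adj s v)).card 2 with hk | hk
    · have hkeq : (SF.filter (fun s => G.Adj s v)).card = 1 := by omega
      have hzero : (SF.filter (fun s => v ∈ nonIso G s)).card = 0 := by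
        rw [Finset.card_eq_zero]
        by_contra hne
        obtain ⟨s, hsf⟩ := Finset.nonempty_of_ne_empty hne
        rw [Finset.mem_filter] at hsf
        obtain ⟨hsSF, hni⟩ := hsf
        have hs : s ∈ S := (hmemSF s).1 hsSF
        obtain ⟨hvN, u, huN, huv, hnadj⟩ := hni
        have hsv : G.Adj s v := hvN
        have huniq : ∀ s' ∈ S, G.Adj s' v → s' = s := by
          intro s' hs' hadj'
          have h1 : s' ∈ SF.filter (fun s => G.Adj s v) :=
            Finset.mem_filter.2 ⟨(hmemSF s').2 hs', hadj'⟩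
          have h2 : s ∈ SF.filter (fun s => G.Adj s v) :=
            Finset.mem_filter.2 ⟨hsSF, hsv⟩
          exact Finset.card_le_one.1 (le_of_eq hkeq) s' h1 s h2
        exact hnadj (private_adj hcis hSst hSc hv hs hsv huniq huN huv)
      omega
    · omega
  -- double counting swaps
  have hswap1 : ∑ s ∈ SF, (CF.filter (fun v => G.Adj s v)).card
      = ∑ v ∈ CF, (SF.filter (fun s => G.Adj s v)).card := by
    simp only [Finset.card_filter]
    exact Finset.sum_comm
  have hswap2 : ∑ s ∈ SF, (CF.filter (fun v => v ∈ nonIso G s)).card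
      = ∑ v ∈ CF, (SF.filter (fun s => v ∈ nonIso G s)).card := by
    simp only [Finset.card_filter]
    exact Finset.sum_comm
  have hA : 2 * (∑ s ∈ SF, (CF.filter (fun v => G.Adj s v)).card) + 2 * SF.card ≤
      2 * (G.cliqueNumber * SF.card) + ∑ s ∈ SF, (CF.filter (fun v => v ∈ nonIso G s)).card := by
    calc 2 * (∑ s ∈ SF, (CF.filter (fun v => G.Adj s v)).card) + 2 * SF.card
        = ∑ s ∈ SF, (2 * (CF.filter (fun v => G.Adj s v)).card + 2) := by
          rw [Finset.sum_add_distrib, Finset.mul_sum, Finset.sum_const, smul_eq_mul,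
            mul_comm SF.card 2]
      _ ≤ ∑ s ∈ SF, (2 * G.cliqueNumber + (CF.filter (fun v => v ∈ nonIso G s)).card) :=
          Finset.sum_le_sum hpers
      _ = 2 * (G.cliqueNumber * SF.card) +
            ∑ s ∈ SF, (CF.filter (fun v => v ∈ nonIso G s)).card := by
          rw [Finset.sum_add_distrib, Finset.sum_const, smul_eq_mul,
            mul_comm SF.card (2 * G.cliqueNumber), mul_assoc]
  have hB : (∑ v ∈ CF, (SF.filter (fun s => v ∈ nonIso G s)).card) + 2 * CF.card ≤
      2 * ∑ v ∈ CF, (SF.filter (fun s => G.Adj s v)).card := by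
    calc (∑ v ∈ CF, (SF.filter (fun s => v ∈ nonIso G s)).card) + 2 * CF.card
        = ∑ v ∈ CF, ((SF.filter (fun s => v ∈ nonIso G s)).card + 2) := by
          rw [Finset.sum_add_distrib, Finset.sum_const, smul_eq_mul, mul_comm CF.card 2]
      _ ≤ ∑ v ∈ CF, 2 * (SF.filter (fun s => G.Adj s v)).card := Finset.sum_le_sum hperv
      _ = 2 * ∑ v ∈ CF, (SF.filter (fun s => G.Adj s v)).card := by rw [Finset.mul_sum]
  rw [← hswap1, ← hswap2] at hB
  have hfinal : Fintype.card V ≤ G.cliqueNumber * SF.card := by omega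
  calc Fintype.card V ≤ G.cliqueNumber * SF.card := hfinal
    _ = G.stabilityNumber * G.cliqueNumber := by rw [hSFcard, mul_comm]
end
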